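/- arXiv:2006.10617 — 8 statements merged into one kernel-verified Lean document; each statement's English description precedes it below -/
import Mathlib

section
/- Let X be a nonempty compact connected metric space such that every point of X has an open neighborhood homeomorphic to C × ℝ, where C = ℕ → Bool is the Cantor space. If some path component of X is dense in X, then the set {x ∈ X : the path component of x is dense in X} is comeagre (residual) in X; in particular it is dense. -/
open Set Topology

/-- Points on the same plaque of a Cantor-set-times-line chart are joined by a path. -/
lemma plaque_joined' {X : Type*} [TopologicalSpace X] {W : Set X}
    (h : W ≃ₜ ((ℕ → Bool) × ℝ)) {p q : W} (hc : (h p).1 = (h q).1) :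
    Joined (p : X) (q : X) := by
  have j2 : Joined ((h p).2) ((h q).2) := PathConnectedSpace.joined _ _
  have j0 : Joined (h p) (h q) := by
    have jc : Joined ((h p).1) ((h q).1) := hc ▸ Joined.refl _
    exact ⟨jc.somePath.prod j2.somePath⟩
  have j3 : Joined (h.symm (h p)) (h.symm (h q)) := ⟨j0.somePath.map h.symm.continuous⟩
  rw [h.symm_apply_apply, h.symm_apply_apply] at j3
  exact ⟨j3.somePath.map continuous_subtype_val⟩

/-- The path-saturation of an open set is open, in a space locally
homeomorphic to (Cantor set) × ℝ. -/
lemma isOpen_sat' {X : Type*} [TopologicalSpace X]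
    (hloc : ∀ x : X, ∃ U : Set X, x ∈ U ∧ IsOpen U ∧
      Nonempty (U ≃ₜ ((ℕ → Bool) × ℝ)))
    (U : Set X) (hU : IsOpen U) : IsOpen {x | ∃ y ∈ U, Joined y x} := by
  set S : Set X := {x | ∃ y ∈ U, Joined y x} with hSdef
  have Ssat : ∀ p ∈ S, ∀ q : X, Joined p q → q ∈ S := by
    rintro p ⟨y, hy, hj⟩ q hpq
    exact ⟨y, hy, hj.trans hpq⟩
  have US : U ⊆ S := fun y hy => ⟨y, hy, Joined.refl y⟩
  have Uint : U ⊆ interior S := interior_maximal US hU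
  have main : S ⊆ interior S := by
    rintro z ⟨y, hyU, hj⟩
    set γ : Path y z := hj.somePath
    set f : ℝ → X := ⇑γ.extend with hfdef
    have hfc : Continuous f := γ.continuous_extend
    set T : Set ℝ := {t | t ∈ Icc (0:ℝ) 1 ∧ f t ∈ interior S} with hTdef
    have h0T : (0:ℝ) ∈ T := by
      refine ⟨⟨le_refl _, zero_le_one⟩, ?_⟩
      show γ.extend 0 ∈ interior S
      rw [Path.extend_zero]
      exact Uint hyU
    have key : ∀ t ∈ Icc (0:ℝ) 1, t ∈ closure T → t ∈ T := by
      intro t htI hcl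
      obtain ⟨W, hmemW, hWopen, ⟨h⟩⟩ := hloc (f t)
      have hnW : f ⁻¹' W ∈ 𝓝 t := hfc.continuousAt.preimage_mem_nhds (hWopen.mem_nhds hmemW)
      obtain ⟨ε, εpos, hball⟩ := Metric.mem_nhds_iff.1 hnW
      obtain ⟨t', ht'T, ht'd⟩ := Metric.mem_closure_iff.1 hcl ε εpos
      have ht'ball : t' ∈ Metric.ball t ε := by
        rw [Metric.mem_ball, dist_comm]; exact ht'd
      have hseg : uIcc t t' ⊆ f ⁻¹' W := by
        rw [← segment_eq_uIcc]
        exact fun u hu => hball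
          ((convex_ball t ε).segment_subset (Metric.mem_ball_self εpos) ht'ball hu)
      haveI : PreconnectedSpace ↥(uIcc t t') := Subtype.preconnectedSpace isPreconnected_uIcc
      set g : ↥(uIcc t t') → (ℕ → Bool) := fun u => (h ⟨f u, hseg u.2⟩).1 with hg
      have hgc : Continuous g :=
        continuous_fst.comp (h.continuous.comp
          (Continuous.subtype_mk (hfc.comp continuous_subtype_val) _))
      have hsub : (range g).Subsingleton := (isPreconnected_range hgc).subsingleton
      have heq : (h ⟨f t, hmemW⟩).1 = (h ⟨f t', hseg right_mem_uIcc⟩).1 := by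
        have := hsub (mem_range_self (⟨t, left_mem_uIcc⟩ : ↥(uIcc t t')))
          (mem_range_self (⟨t', right_mem_uIcc⟩ : ↥(uIcc t t')))
        exact this
      set O : Set ↥W := Subtype.val ⁻¹' (interior S) with hO
      have hOopen : IsOpen O := isOpen_interior.preimage continuous_subtype_val
      set B : Set (ℕ → Bool) := Prod.fst '' (⇑h '' O) with hB
      have hBopen : IsOpen B := isOpenMap_fst _ (h.isOpenMap _ hOopen)
      set V : Set X := Subtype.val '' (⇑h ⁻¹' (B ×ˢ (univ : Set ℝ))) with hV
      have hVopen : IsOpen V :=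
        hWopen.isOpenMap_subtype_val _ ((hBopen.prod isOpen_univ).preimage h.continuous)
      have hVS : V ⊆ S := by
        rintro x ⟨w, hw, rfl⟩
        obtain ⟨o, ho, hoeq⟩ : ∃ o ∈ ⇑h '' O, o.1 = (h w).1 := hw.1
        obtain ⟨ow, howO, rfl⟩ := ho
        exact Ssat _ (interior_subset howO) _ (plaque_joined' h hoeq)
      have hVint : V ⊆ interior S := interior_maximal hVS hVopen
      refine ⟨htI, hVint ?_⟩
      refine ⟨⟨f t, hmemW⟩, ⟨?_, mem_univ _⟩, rfl⟩
      rw [heq]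
      exact ⟨h ⟨f t', hseg right_mem_uIcc⟩, mem_image_of_mem _ ht'T.2, rfl⟩
    have hTne : T.Nonempty := ⟨0, h0T⟩
    have hbdd : BddAbove T := ⟨1, fun u hu => hu.1.2⟩
    have hmI : sSup T ∈ Icc (0:ℝ) 1 :=
      ⟨le_csSup hbdd h0T, csSup_le hTne fun u hu => hu.1.2⟩
    have hmT : sSup T ∈ T := key _ hmI (csSup_mem_closure hTne hbdd)
    have hm1 : sSup T = 1 := by
      by_contra hne
      have hmlt : sSup T < 1 := lt_of_le_of_ne hmI.2 hne
      have hnhds : f ⁻¹' (interior S) ∈ 𝓝 (sSup T) :=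
        hfc.continuousAt.preimage_mem_nhds (isOpen_interior.mem_nhds hmT.2)
      obtain ⟨ε, εpos, hball⟩ := Metric.mem_nhds_iff.1 hnhds
      have ht₂m : sSup T < min (sSup T + ε/2) 1 := lt_min (by linarith) hmlt
      have ht₂T : min (sSup T + ε/2) 1 ∈ T := by
        refine ⟨⟨le_trans hmI.1 ht₂m.le, min_le_right _ _⟩, hball ?_⟩
        rw [Metric.mem_ball, Real.dist_eq]
        have h1 : min (sSup T + ε/2) 1 ≤ sSup T + ε/2 := min_le_left _ _
        rw [abs_of_pos (by linarith)]
        linarith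
      exact absurd (le_csSup hbdd ht₂T) (not_le.2 ht₂m)
    have hf1 : f 1 = z := γ.extend_one
    have := hmT.2
    rw [hm1, hf1] at this
    exact this
  have : S = interior S := Subset.antisymm main interior_subset
  rw [this]
  exact isOpen_interior

theorem residual_dense_leaves_of_locally_cantor_times_interval
    {X : Type*} [MetricSpace X] [CompactSpace X] [ConnectedSpace X] [Nonempty X]
    (hloc : ∀ x : X, ∃ U : Set X, x ∈ U ∧ IsOpen U ∧
      Nonempty (U ≃ₜ ((ℕ → Bool) × ℝ)))
    (hdense : ∃ x : X, Dense (pathComponent x)) :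
    {x : X | Dense (pathComponent x)} ∈ residual X ∧
      Dense {x : X | Dense (pathComponent x)} := by
  obtain ⟨x₀, hx₀⟩ := hdense
  obtain ⟨B, hBc, -, hB⟩ := TopologicalSpace.exists_countable_basis X
  set F : Set (Set X) := (fun U => {x : X | ∃ y ∈ U, Joined y x}) '' {U ∈ B | U.Nonempty}
    with hF
  have hFc : F.Countable := (hBc.mono (sep_subset _ _)).image _
  have hmem : ⋂₀ F ∈ residual X := by
    rw [countable_sInter_mem hFc]
    rintro s ⟨U, ⟨hUB, hUne⟩, rfl⟩
    refine residual_of_dense_open (isOpen_sat' hloc U (hB.isOpen hUB)) ?_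
    have hsubset : pathComponent x₀ ⊆ {x : X | ∃ y ∈ U, Joined y x} := by
      intro d hd
      have hdd : Dense (pathComponent d) := by rwa [pathComponent_congr hd]
      obtain ⟨y, hyU, hyd⟩ := hdd.inter_open_nonempty U (hB.isOpen hUB) hUne
      exact ⟨y, hyU, (show Joined d y from hyd).symm⟩
    exact hx₀.mono hsubset
  have hsub : ⋂₀ F ⊆ {x : X | Dense (pathComponent x)} := by
    intro x hx
    rw [Set.mem_setOf_eq, dense_iff_inter_open]
    rintro V hV ⟨v, hv⟩
    obtain ⟨U, hUB, hvU, hUV⟩ := hB.exists_subset_of_mem_open hv hV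
    have hxU : x ∈ {x : X | ∃ y ∈ U, Joined y x} :=
      hx _ ⟨U, ⟨hUB, ⟨v, hvU⟩⟩, rfl⟩
    obtain ⟨y, hyU, hyx⟩ := hxU
    exact ⟨y, hUV hyU, hyx.symm⟩
  have hres := Filter.mem_of_superset hmem hsub
  exact ⟨hres, dense_of_mem_residual hres⟩
end

section
/- Let X be a continuum (a nonempty compact connected Hausdorff space) and let K be a proper subcontinuum of X (a nonempty compact connected subset with K ≠ X). If X \ K is disconnected, then X is decomposable. -/
open Set

private lemma union_piece_connected {X : Type*} [TopologicalSpace X] [CompactSpace X]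
    [ConnectedSpace X]
    {K U V : Set X} (hK : IsConnected K) (hU : IsOpen U) (hV : IsOpen V)
    (hdisj : U ∩ V = ∅) (hcover : U ∪ V = Kᶜ) (hV0 : V.Nonempty) :
    IsCompact (K ∪ U) ∧ IsConnected (K ∪ U) ∧ K ∪ U ≠ Set.univ := by
  set A := K ∪ U with hA
  have hKV : K ∩ V = ∅ := by
    have : K ∩ (U ∪ V) = ∅ := by rw [hcover]; simp
    rw [Set.inter_union_distrib_left, Set.union_empty_iff] at this
    exact this.2
  have hAV : A = Vᶜ := by
    apply Set.eq_of_subset_of_subset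
    · rintro x (hx | hx) hxV
      · have : x ∈ K ∩ V := ⟨hx, hxV⟩
        rw [hKV] at this; exact this
      · have : x ∈ U ∩ V := ⟨hx, hxV⟩
        rw [hdisj] at this; exact this
    · intro x hx
      by_cases hxK : x ∈ K
      · exact Or.inl hxK
      · have : x ∈ U ∪ V := by rw [hcover]; exact hxK
        rcases this with h | h
        · exact Or.inr h
        · exact absurd h hx
  have hAclosed : IsClosed A := by rw [hAV]; exact hV.isClosed_compl
  have hAne : A ≠ Set.univ := by
    intro h
    obtain ⟨v, hv⟩ := hV0
    have : v ∈ A := h ▸ Set.mem_univ v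
    rw [hAV] at this
    exact this hv
  refine ⟨hAclosed.isCompact, ⟨hK.nonempty.mono Set.subset_union_left, ?_⟩, hAne⟩
  -- preconnectedness of A
  intro p q hp hq hcov ⟨x, hxA, hxp⟩ ⟨y, hyA, hyq⟩
  by_contra hempty
  rw [Set.not_nonempty_iff_eq_empty] at hempty
  -- K is contained in p or in q
  have hKpq : K ⊆ p ∨ K ⊆ q := by
    by_cases h1 : (K ∩ p).Nonempty
    · by_cases h2 : (K ∩ q).Nonempty
      · have := hK.isPreconnected p q hp hq
          (Set.Subset.trans Set.subset_union_left hcov) h1 h2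
        obtain ⟨z, hzK, hzpq⟩ := this
        have : z ∈ A ∩ (p ∩ q) := ⟨Or.inl hzK, hzpq⟩
        rw [hempty] at this
        exact this.elim
      · left
        intro z hz
        rcases hcov (Or.inl hz) with h | h
        · exact h
        · exact absurd ⟨z, hz, h⟩ h2
    · right
      intro z hz
      rcases hcov (Or.inl hz) with h | h
      · exact absurd ⟨z, hz, h⟩ h1
      · exact h
  -- symmetric argument
  have key : ∀ p' q' : Set X, IsOpen p' → IsOpen q' → A ⊆ p' ∪ q' →
      A ∩ (p' ∩ q') = ∅ → K ⊆ p' → (A ∩ q').Nonempty → False := by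
    intro p' q' hp' hq' hcov' hempty' hKp' ⟨w, hwA, hwq⟩
    set Q := A ∩ q' with hQ
    have hQU : Q ⊆ U := by
      rintro z ⟨hzA, hzq⟩
      rcases hzA with hzK | hzU
      · exact absurd (show z ∈ A ∩ (p' ∩ q') from ⟨Or.inl hzK, hKp' hzK, hzq⟩)
          (by rw [hempty']; exact id)
      · exact hzU
    have hQopen : IsOpen Q := by
      have : Q = U ∩ q' := by
        apply Set.eq_of_subset_of_subset
        · intro z hz; exact ⟨hQU hz, hz.2⟩
        · rintro z ⟨hzU, hzq⟩; exact ⟨Or.inr hzU, hzq⟩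
      rw [this]; exact hU.inter hq'
    have hQclosed : IsClosed Q := by
      have : Q = A \ p' := by
        apply Set.eq_of_subset_of_subset
        · rintro z ⟨hzA, hzq⟩
          refine ⟨hzA, fun hzp => ?_⟩
          exact absurd (show z ∈ A ∩ (p' ∩ q') from ⟨hzA, hzp, hzq⟩)
            (by rw [hempty']; exact id)
        · rintro z ⟨hzA, hzp⟩
          rcases hcov' hzA with h | h
          · exact absurd h hzp
          · exact ⟨hzA, h⟩
      rw [this]; exact hAclosed.sdiff hp'
    rcases (isClopen_iff.mp ⟨hQclosed, hQopen⟩) with h | h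
    · exact absurd (show w ∈ Q from ⟨hwA, hwq⟩) (by rw [h]; exact id)
    · obtain ⟨k, hk⟩ := hK.nonempty
      have hkQ : k ∈ Q := h ▸ Set.mem_univ k
      have : k ∈ K ∩ V := by
        have hkU := hQU hkQ
        have : k ∈ U ∪ V := Or.inl hkU
        rw [hcover] at this
        exact absurd hk this
      rw [hKV] at this
      exact this.elim
  rcases hKpq with hKp | hKq
  · exact key p q hp hq hcov hempty hKp ⟨y, hyA, hyq⟩
  · exact key q p hq hp (fun z hz => (hcov hz).symm) (by rw [← hempty]; ext z; simp; tauto)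
      hKq ⟨x, hxA, hxp⟩

/-- Let `X` be a continuum (nonempty compact connected Hausdorff
space) and `K` a proper subcontinuum. If `X \ K` is disconnected then `X` is
decomposable (the union of two proper subcontinua). -/
theorem decomposable_of_complement_of_subcontinuum_disconnected
    {X : Type*} [TopologicalSpace X] [T2Space X] [CompactSpace X]
    [ConnectedSpace X] [Nonempty X]
    (K : Set X) (hKcomp : IsCompact K) (hKconn : IsConnected K)
    (hKproper : K ≠ Set.univ)
    (hdisc : ¬ IsConnected (Set.univ \ K)) :
    ∃ A B : Set X,
      IsCompact A ∧ IsConnected A ∧ A ≠ Set.univ ∧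
      IsCompact B ∧ IsConnected B ∧ B ≠ Set.univ ∧
      A ∪ B = Set.univ := by
  have hSdef : Set.univ \ K = Kᶜ := by ext x; simp
  have hSopen : IsOpen (Kᶜ) := hKcomp.isClosed.isOpen_compl
  have hSne : (Kᶜ).Nonempty := by
    rw [Set.nonempty_compl]; exact hKproper
  rw [hSdef] at hdisc
  have hnp : ¬ IsPreconnected (Kᶜ) := fun h => hdisc ⟨hSne, h⟩
  rw [IsPreconnected] at hnp
  push_neg at hnp
  obtain ⟨u, v, hu, hv, hcov, hu0, hv0, hempty⟩ := hnp
  set U := Kᶜ ∩ u with hU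
  set V := Kᶜ ∩ v with hV
  have hUopen : IsOpen U := hSopen.inter hu
  have hVopen : IsOpen V := hSopen.inter hv
  have hdisj : U ∩ V = ∅ := by
    rw [← hempty]; ext z; simp [hU, hV]; tauto
  have hcover : U ∪ V = Kᶜ := by
    rw [hU, hV, ← Set.inter_union_distrib_left]
    exact Set.inter_eq_left.mpr hcov
  have hdisj' : V ∩ U = ∅ := by rw [← hdisj]; exact Set.inter_comm V U
  have hcover' : V ∪ U = Kᶜ := by rw [← hcover]; exact Set.union_comm V U
  obtain ⟨hAc, hAconn, hAne⟩ := union_piece_connected hKconn hUopen hVopen hdisj hcover hv0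
  obtain ⟨hBc, hBconn, hBne⟩ := union_piece_connected hKconn hVopen hUopen hdisj' hcover' hu0
  refine ⟨K ∪ U, K ∪ V, hAc, hAconn, hAne, hBc, hBconn, hBne, ?_⟩
  have h1 : K ∪ U ∪ (K ∪ V) = K ∪ (U ∪ V) := by ext z; simp; tauto
  rw [h1, hcover]
  simp
end

section
/- Let X be a continuum (a nonempty compact connected Hausdorff space). If some proper subcontinuum K of X (a nonempty compact connected subset with K ≠ X) has nonempty interior in X, then X is decomposable. -/
/-- Auxiliary: in a connected space, if `K` is nonempty preconnected, `P` is open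
with `closure P ⊆ K ∪ P`, then `K ∪ P` is preconnected. -/
lemma aux_union_preconnected {X : Type*} [TopologicalSpace X] [ConnectedSpace X]
    (K P : Set X) (hKne : K.Nonempty) (hKconn : IsPreconnected K)
    (hP : IsOpen P) (hclP : closure P ⊆ K ∪ P) :
    IsPreconnected (K ∪ P) := by
  intro u v hu hv hsub hsu hsv
  by_contra hcon
  have hempty : (K ∪ P) ∩ (u ∩ v) = ∅ := Set.not_nonempty_iff_eq_empty.mp hcon
  have key : ∀ u v : Set X, IsOpen u → IsOpen v → (K ∪ P) ⊆ u ∪ v →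
      ((K ∪ P) ∩ v).Nonempty → (K ∪ P) ∩ (u ∩ v) = ∅ → K ⊆ u → False := by
    intro u v hu hv hsub hsv hempty hKu
    set W := P ∩ v with hW
    have hWopen : IsOpen W := hP.inter hv
    have hWclosed : IsClosed W := by
      rw [← closure_subset_iff_isClosed]
      intro x hx
      have hxP : x ∈ closure P := closure_mono Set.inter_subset_left hx
      have hxKP : x ∈ K ∪ P := hclP hxP
      have hxuv : x ∈ u ∪ v := hsub hxKP
      have hxnu : x ∉ u := by
        intro hxu
        obtain ⟨y, hyu, hyW⟩ := mem_closure_iff.mp hx u hu hxu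
        have : y ∈ (K ∪ P) ∩ (u ∩ v) := ⟨Or.inr hyW.1, hyu, hyW.2⟩
        rw [hempty] at this; exact this
      have hxv : x ∈ v := hxuv.resolve_left hxnu
      have hxP' : x ∈ P := by
        rcases hxKP with h | h
        · exact absurd (hKu h) hxnu
        · exact h
      exact ⟨hxP', hxv⟩
    have hWne : W.Nonempty := by
      obtain ⟨y, hy, hyv⟩ := hsv
      rcases hy with h | h
      · exfalso
        have : y ∈ (K ∪ P) ∩ (u ∩ v) := ⟨Or.inl h, hKu h, hyv⟩
        rw [hempty] at this; exact this
      · exact ⟨y, h, hyv⟩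
    have hWuniv : W = Set.univ := IsClopen.eq_univ ⟨hWclosed, hWopen⟩ hWne
    obtain ⟨k, hk⟩ := hKne
    have hkv : k ∈ v := by
      have : k ∈ W := hWuniv ▸ Set.mem_univ k
      exact this.2
    have : k ∈ (K ∪ P) ∩ (u ∩ v) := ⟨Or.inl hk, hKu hk, hkv⟩
    rw [hempty] at this; exact this
  -- K is within u or within v
  have hKsub : K ⊆ u ∪ v := fun x hx => hsub (Or.inl hx)
  by_cases hKu : (K ∩ u).Nonempty
  · by_cases hKv : (K ∩ v).Nonempty
    · obtain ⟨x, hx⟩ := hKconn u v hu hv hKsub hKu hKv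
      have : x ∈ (K ∪ P) ∩ (u ∩ v) := ⟨Or.inl hx.1, hx.2⟩
      rw [hempty] at this; exact this
    · have hKinu : K ⊆ u := by
        intro x hx
        rcases hKsub hx with h | h
        · exact h
        · exact absurd ⟨x, hx, h⟩ hKv
      exact key u v hu hv hsub hsv hempty hKinu
  · have hKinv : K ⊆ v := by
      intro x hx
      rcases hKsub hx with h | h
      · exact absurd ⟨x, hx, h⟩ hKu
      · exact h
    have hempty' : (K ∪ P) ∩ (v ∩ u) = ∅ := by
      rw [Set.inter_comm v u]; exact hempty
    exact key v u hv hu (by rwa [Set.union_comm v u]) hsu hempty' hKinv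

/-- Let `X` be a continuum (nonempty compact connected Hausdorff
space). If some proper subcontinuum `K` has nonempty interior in `X`, then `X`
is decomposable (the union of two proper subcontinua). -/
theorem decomposable_of_subcontinuum_with_interior
    {X : Type*} [TopologicalSpace X] [T2Space X] [CompactSpace X]
    [ConnectedSpace X] [Nonempty X]
    (K : Set X) (hKcomp : IsCompact K) (hKconn : IsConnected K)
    (hKproper : K ≠ Set.univ)
    (hint : (interior K).Nonempty) :
    ∃ A B : Set X,
      IsCompact A ∧ IsConnected A ∧ A ≠ Set.univ ∧
      IsCompact B ∧ IsConnected B ∧ B ≠ Set.univ ∧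
      A ∪ B = Set.univ := by
  have hKclosed : IsClosed K := hKcomp.isClosed
  have hKcne : Kᶜ.Nonempty := Set.nonempty_compl.mpr hKproper
  by_cases hconn : IsPreconnected Kᶜ
  · -- X = K ∪ closure Kᶜ
    refine ⟨K, closure Kᶜ, hKcomp, hKconn, hKproper, ?_, ?_, ?_, ?_⟩
    · exact (isClosed_closure).isCompact
    · exact ⟨hKcne.closure, hconn.closure⟩
    · intro h
      rw [closure_compl] at h
      have : interior K = ∅ := by
        have := congrArg (·ᶜ) h
        simpa using this
      rw [this] at hint
      exact Set.not_nonempty_empty hint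
    · apply Set.eq_univ_of_univ_subset
      intro x _
      by_cases hx : x ∈ K
      · exact Or.inl hx
      · exact Or.inr (subset_closure hx)
  · -- Kᶜ disconnected: split into P, Q
    rw [IsPreconnected] at hconn
    push_neg at hconn
    obtain ⟨u, v, hu, hv, hsub, hKu, hKv, hdisj⟩ := hconn
    have hdisj' : Kᶜ ∩ (u ∩ v) = ∅ := hdisj
    set P := Kᶜ ∩ u with hPdef
    set Q := Kᶜ ∩ v with hQdef
    have hPopen : IsOpen P := hKclosed.isOpen_compl.inter hu
    have hQopen : IsOpen Q := hKclosed.isOpen_compl.inter hv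
    have hPQ : P ∩ Q = ∅ := by
      rw [← hdisj']
      ext x
      simp only [hPdef, hQdef, Set.mem_inter_iff, Set.mem_compl_iff]
      tauto
    have hclP : closure P ⊆ K ∪ P := by
      intro x hx
      by_cases hxK : x ∈ K
      · exact Or.inl hxK
      · rcases hsub hxK with h | h
        · exact Or.inr ⟨hxK, h⟩
        · exfalso
          obtain ⟨y, hyQ, hyP⟩ := mem_closure_iff.mp hx Q hQopen ⟨hxK, h⟩
          have : y ∈ P ∩ Q := ⟨hyP, hyQ⟩
          rw [hPQ] at this; exact this
    have hclQ : closure Q ⊆ K ∪ Q := by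
      intro x hx
      by_cases hxK : x ∈ K
      · exact Or.inl hxK
      · rcases hsub hxK with h | h
        · exfalso
          obtain ⟨y, hyP, hyQ⟩ := mem_closure_iff.mp hx P hPopen ⟨hxK, h⟩
          have : y ∈ P ∩ Q := ⟨hyP, hyQ⟩
          rw [hPQ] at this; exact this
        · exact Or.inr ⟨hxK, h⟩
    have hAcomplP : (K ∪ P)ᶜ = Q := by
      apply Set.eq_of_subset_of_subset
      · intro x hx
        have hxK : x ∉ K := fun h => hx (Or.inl h)
        have hxP : x ∉ P := fun h => hx (Or.inr h)
        rcases hsub hxK with h | h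
        · exact absurd ⟨hxK, h⟩ hxP
        · exact ⟨hxK, h⟩
      · intro x hx
        rintro (h | h)
        · exact hx.1 h
        · have : x ∈ P ∩ Q := ⟨h, hx⟩
          rw [hPQ] at this; exact this
    have hAcomplQ : (K ∪ Q)ᶜ = P := by
      apply Set.eq_of_subset_of_subset
      · intro x hx
        have hxK : x ∉ K := fun h => hx (Or.inl h)
        have hxQ : x ∉ Q := fun h => hx (Or.inr h)
        rcases hsub hxK with h | h
        · exact ⟨hxK, h⟩
        · exact absurd ⟨hxK, h⟩ hxQ
      · intro x hx
        rintro (h | h)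
        · exact hx.1 h
        · have : x ∈ P ∩ Q := ⟨hx, h⟩
          rw [hPQ] at this; exact this
    have hAclosed : IsClosed (K ∪ P) := by
      rw [← isOpen_compl_iff, hAcomplP]; exact hQopen
    have hBclosed : IsClosed (K ∪ Q) := by
      rw [← isOpen_compl_iff, hAcomplQ]; exact hPopen
    refine ⟨K ∪ P, K ∪ Q, hAclosed.isCompact, ?_, ?_, hBclosed.isCompact, ?_, ?_, ?_⟩
    · exact ⟨hKconn.1.mono Set.subset_union_left,
        aux_union_preconnected K P hKconn.1 hKconn.2 hPopen hclP⟩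
    · intro h
      obtain ⟨q, hq⟩ := hKv
      have : q ∈ (K ∪ P)ᶜ := hAcomplP ▸ hq
      rw [h] at this
      exact this (Set.mem_univ q)
    · exact ⟨hKconn.1.mono Set.subset_union_left,
        aux_union_preconnected K Q hKconn.1 hKconn.2 hQopen hclQ⟩
    · intro h
      obtain ⟨p, hp⟩ := hKu
      have : p ∈ (K ∪ Q)ᶜ := hAcomplQ ▸ hp
      rw [h] at this
      exact this (Set.mem_univ p)
    · apply Set.eq_univ_of_univ_subset
      intro x _
      by_cases hx : x ∈ K
      · exact Or.inl (Or.inl hx)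
      · rcases hsub hx with h | h
        · exact Or.inl (Or.inr ⟨hx, h⟩)
        · exact Or.inr (Or.inr ⟨hx, h⟩)
end

section
/- Let X be a continuum (a nonempty compact connected Hausdorff space) with more than one point. Then for every point p ∈ X, the composant of p, i.e. the union of all proper subcontinua of X containing p, is dense in X. -/
/-- In a compact Hausdorff space, if a closed set is disjoint from the connected
component of a point, then some clopen set containing the point is disjoint from it. -/
lemma exists_isClopen_disjoint_of_compact
    {Y : Type*} [TopologicalSpace Y] [T2Space Y] [CompactSpace Y]
    (y : Y) (Z : Set Y) (hZ : IsClosed Z) (hd : connectedComponent y ∩ Z = ∅) :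
    ∃ F : Set Y, IsClopen F ∧ y ∈ F ∧ F ∩ Z = ∅ := by
  rw [connectedComponent_eq_iInter_isClopen y] at hd
  have h := hZ.isCompact.elim_finite_subfamily_closed
      (fun s : { s : Set Y // IsClopen s ∧ y ∈ s } => (s : Set Y))
      (fun s => s.2.1.1) (by rw [Set.inter_comm] at hd; exact hd)
  obtain ⟨t, ht⟩ := h
  refine ⟨⋂ i ∈ t, (i : Set Y), isClopen_biInter_finset fun i _ => i.2.1,
    Set.mem_iInter₂.2 fun i _ => i.2.2, ?_⟩
  rw [Set.inter_comm] at ht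
  exact ht

/-- In a continuum `X` (nonempty compact connected Hausdorff space)
with more than one point, the composant of every point `p` (the union of all
proper subcontinua containing `p`) is dense in `X`. -/
theorem composant_dense
    {X : Type*} [TopologicalSpace X] [T2Space X] [CompactSpace X]
    [ConnectedSpace X] [Nontrivial X] (p : X) :
    Dense (⋃₀ {K : Set X | IsCompact K ∧ IsConnected K ∧ K ≠ Set.univ ∧ p ∈ K}) := by
  rw [dense_iff_inter_open]
  intro W hW ⟨x, hxW⟩
  by_cases hpW : p ∈ W
  · -- the singleton {p} is a proper subcontinuum containing p
    obtain ⟨q, hq⟩ := exists_ne p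
    have hne : ({p} : Set X) ≠ Set.univ := by
      intro h
      have : q ∈ ({p} : Set X) := h ▸ Set.mem_univ q
      exact hq (by simpa using this)
    have hmem : ({p} : Set X) ∈ {K : Set X | IsCompact K ∧ IsConnected K ∧ K ≠ Set.univ ∧ p ∈ K} :=
      ⟨isCompact_singleton, isConnected_singleton, hne, rfl⟩
    exact ⟨p, hpW, Set.mem_sUnion.2 ⟨{p}, hmem, rfl⟩⟩
  · -- pick a closed neighborhood of x inside W
    obtain ⟨Cn, hCn_nhds, hCn_closed, hCnW⟩ :=
      exists_mem_nhds_isClosed_subset (hW.mem_nhds hxW)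
    set V : Set X := interior Cn with hVdef
    have hxV : x ∈ V := mem_interior_iff_mem_nhds.2 hCn_nhds
    have hclVW : closure V ⊆ W := by
      calc closure V ⊆ closure Cn := closure_mono interior_subset
        _ = Cn := hCn_closed.closure_eq
        _ ⊆ W := hCnW
    -- U is the open complement of closure V ; it contains p
    set U : Set X := (closure V)ᶜ with hUdef
    have hU_open : IsOpen U := isClosed_closure.isOpen_compl
    have hpU : p ∈ U := fun h => hpW (hclVW (by simpa using h))
    set A : Set X := closure U with hAdef
    have hA_closed : IsClosed A := isClosed_closure
    have hpA : p ∈ A := subset_closure hpU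
    have hxA : x ∉ A := by
      have : A = (interior (closure V))ᶜ := by rw [hAdef, hUdef, closure_compl]
      rw [this]
      simp only [Set.mem_compl_iff, not_not]
      exact interior_maximal subset_closure isOpen_interior hxV
    haveI : CompactSpace A := isCompact_iff_compactSpace.mp hA_closed.isCompact
    set pA : A := ⟨p, hpA⟩
    set C : Set X := Subtype.val '' connectedComponent pA with hCdef
    have hpC : p ∈ C := ⟨pA, mem_connectedComponent, rfl⟩
    have hCA : C ⊆ A := by rintro _ ⟨z, _, rfl⟩; exact z.2
    have hC_compact : IsCompact C :=
      (isClosed_connectedComponent.isCompact).image continuous_subtype_val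
    have hC_conn : IsConnected C :=
      (isConnected_connectedComponent).image _ continuous_subtype_val.continuousOn
    have hC_ne : C ≠ Set.univ := fun h => hxA (hCA (h ▸ Set.mem_univ x))
    -- boundary bumping: C must meet the complement of U, which lies in closure V ⊆ W
    by_cases hCU : ∃ q ∈ C, q ∉ U
    · obtain ⟨q, hqC, hqU⟩ := hCU
      have hqW : q ∈ W := hclVW (by simpa [hUdef] using hqU)
      have hmem : C ∈ {K : Set X | IsCompact K ∧ IsConnected K ∧ K ≠ Set.univ ∧ p ∈ K} :=
        ⟨hC_compact, hC_conn, hC_ne, hpC⟩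
      exact ⟨q, hqW, Set.mem_sUnion.2 ⟨C, hmem, hqC⟩⟩
    · exfalso
      push_neg at hCU
      -- C ⊆ U ; find a clopen set in A around the component avoiding A \ U
      set Z : Set A := Subtype.val ⁻¹' Uᶜ with hZdef
      have hZ_closed : IsClosed Z := (hU_open.isClosed_compl).preimage continuous_subtype_val
      have hdisj : connectedComponent pA ∩ Z = ∅ := by
        ext z
        simp only [Set.mem_inter_iff, Set.mem_preimage, Set.mem_compl_iff, Set.mem_empty_iff_false,
          iff_false, not_and, not_not, hZdef]
        intro hz
        exact hCU z ⟨z, hz, rfl⟩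
      obtain ⟨F, hF_clopen, hpF, hFZ⟩ :=
        exists_isClopen_disjoint_of_compact pA Z hZ_closed hdisj
      have hFU : ∀ z : A, z ∈ F → (z : X) ∈ U := by
        intro z hz
        by_contra h
        exact Set.eq_empty_iff_forall_notMem.1 hFZ z ⟨hz, h⟩
      set G : Set X := Subtype.val '' F with hGdef
      have hG_closed : IsClosed G :=
        ((hF_clopen.1.isCompact).image continuous_subtype_val).isClosed
      have hG_open : IsOpen G := by
        obtain ⟨O, hO_open, hOF⟩ := isOpen_induced_iff.1 hF_clopen.2
        have : G = O ∩ U := by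
          ext q
          constructor
          · rintro ⟨z, hz, rfl⟩
            exact ⟨by rw [← hOF] at hz; exact hz, hFU z hz⟩
          · rintro ⟨hqO, hqU⟩
            exact ⟨⟨q, subset_closure hqU⟩, by rw [← hOF]; exact hqO, rfl⟩
        rw [this]
        exact hO_open.inter hU_open
      have hG_clopen : IsClopen G := ⟨hG_closed, hG_open⟩
      have hpG : p ∈ G := ⟨pA, hpF, rfl⟩
      rcases isClopen_iff.1 hG_clopen with h | h
      · rw [h] at hpG
        exact Set.notMem_empty p hpG
      · have hxG : x ∈ G := h ▸ Set.mem_univ x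
        obtain ⟨z, _, rfl⟩ := hxG
        exact hxA z.2
end

section
/- Let f : Q → Q be a Lattès map with lift f̃ : 𝕋² → 𝕋², a covering map each of whose fibers has exactly d elements, with d > 1. Then the critical values of f are contained in π(T): for every q ∈ Q with q ∉ π(T), the fiber f⁻¹(q) has at least d elements (so q is not a critical value of f). -/
/-- The 2-torus `𝕋² = (ℝ/ℤ) × (ℝ/ℤ)`. -/
abbrev Torus : Type := UnitAddCircle × UnitAddCircle

/-- The equivalence relation `x ∼ -x` on the torus. -/
def negSetoid : Setoid Torus where
  r x y := x = y ∨ x = -y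
  iseqv := by
    refine ⟨fun x => Or.inl rfl, fun {x y} h => ?_, fun {x y z} h1 h2 => ?_⟩
    · rcases h with h | h
      · exact Or.inl h.symm
      · right; rw [h, neg_neg]
    · rcases h1 with h1 | h1 <;> rcases h2 with h2 | h2 <;>
        simp only [h1, h2, neg_neg] <;> tauto

/-- The quotient `Q` of the torus by `x ∼ -x` (topologically a sphere). -/
abbrev Q : Type := Quotient negSetoid

/-- The quotient (branched covering) map `π : 𝕋² → Q`. -/
def piQ : Torus → Q := Quotient.mk negSetoid

/-- The set of 2-torsion points of the torus (the four branch points of `π`,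
whose images under `π` are the critical values of `π`). -/
def torsion2 : Set Torus := {z : Torus | z + z = 0}

/-- For a Lattès map `f : Q → Q` with lift a covering map
`f̃ : 𝕋² → 𝕋²` all of whose fibers have exactly `d > 1` elements, the critical
values of `f` are contained in `π(T)`: every point `q ∉ π(T)` has at least `d`
preimages under `f` (so `q` is not a critical value of `f`). -/
theorem lattes_critical_values_subset_branch_values
    (f : Q → Q) (hf : Continuous f)
    (ftilde : Torus → Torus) (hcov : IsCoveringMap ftilde)
    (d : ℕ) (hd : 1 < d)
    (hfib : ∀ z : Torus, (ftilde ⁻¹' {z}).ncard = d)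
    (hsemi : ∀ z : Torus, piQ (ftilde z) = f (piQ z))
    (q : Q) (hq : q ∉ piQ '' torsion2) :
    ∃ s : Finset Q, (↑s : Set Q) ⊆ f ⁻¹' {q} ∧ s.card = d := by
  obtain ⟨z, hz⟩ := Quotient.exists_rep q
  have hz2 : z + z ≠ 0 := fun h => hq ⟨z, h, hz⟩
  have hzne : z ≠ -z := fun h => hz2 (by rw [eq_neg_iff_add_eq_zero] at h; exact h)
  have hdne : d ≠ 0 := by omega
  classical
  have hfin1 : (ftilde ⁻¹' {z}).Finite :=
    Set.finite_of_ncard_ne_zero (by rw [hfib]; exact hdne)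
  have hfin2 : (ftilde ⁻¹' {-z}).Finite :=
    Set.finite_of_ncard_ne_zero (by rw [hfib]; exact hdne)
  have hdisj : Disjoint (ftilde ⁻¹' {z}) (ftilde ⁻¹' {-z}) := by
    rw [Set.disjoint_left]
    intro x hx hx'
    simp only [Set.mem_preimage, Set.mem_singleton_iff] at hx hx'
    exact hzne (hx.symm.trans hx')
  set S : Set Torus := ftilde ⁻¹' {z} ∪ ftilde ⁻¹' {-z} with hS
  have hSfin : S.Finite := hfin1.union hfin2
  have hScard : S.ncard = 2 * d := by
    rw [Set.ncard_union_eq hdisj hfin1 hfin2, hfib, hfib]; ring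
  set Sf : Finset Torus := hSfin.toFinset with hSf
  have hSfcard : Sf.card = 2 * d := by
    rw [← hScard, Set.ncard_eq_toFinset_card S hSfin]
  -- image under piQ
  have hfibers : ∀ a ∈ Sf.image piQ, (Sf.filter fun x => piQ x = a).card ≤ 2 := by
    intro a _
    rcases (Sf.filter fun x => piQ x = a).eq_empty_or_nonempty with he | ⟨x, hx⟩
    · simp [he]
    · have hsub : (Sf.filter fun x => piQ x = a) ⊆ {x, -x} := by
        intro y hy
        rw [Finset.mem_filter] at hx hy
        have : piQ x = piQ y := hx.2.trans hy.2.symm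
        have hr : negSetoid.r x y := Quotient.exact this
        rcases hr with h | h
        · simp [← h]
        · simp [h, neg_neg]
      calc (Sf.filter fun x => piQ x = a).card ≤ ({x, -x} : Finset Torus).card :=
            Finset.card_le_card hsub
        _ ≤ 2 := Finset.card_insert_le _ _ |>.trans (by simp)
  have hle : Sf.card ≤ 2 * (Sf.image piQ).card :=
    Finset.card_le_mul_card_image Sf 2 hfibers
  have hdle : d ≤ (Sf.image piQ).card := by omega
  obtain ⟨s, hs_sub, hs_card⟩ := Finset.exists_subset_card_eq hdle
  refine ⟨s, ?_, hs_card⟩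
  intro y hy
  have hy' : y ∈ Sf.image piQ := hs_sub hy
  rw [Finset.mem_image] at hy'
  obtain ⟨x, hxS, hxy⟩ := hy'
  have hxS' : x ∈ S := hSfin.mem_toFinset.mp hxS
  have hfx : f (piQ x) = q := by
    rw [← hsemi x]
    rcases hxS' with h | h
    · simp only [Set.mem_preimage, Set.mem_singleton_iff] at h
      rw [h]; exact hz
    · simp only [Set.mem_preimage, Set.mem_singleton_iff] at h
      rw [h]
      have : piQ (-z) = piQ z := Quotient.sound (Or.inr rfl)
      rw [this]; exact hz
  simp only [Set.mem_preimage, Set.mem_singleton_iff]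
  rw [← hxy]; exact hfx
end

section
/- Let f : Q → Q be a Lattès map with lift f̃ : 𝕋² → 𝕋², a covering map each of whose fibers has exactly d elements, with d > 1. Then the critical values of π are not critical points of f: for every 2-torsion point z ∈ T, there exists a neighborhood of π(z) in Q on which f is injective. -/
lemma piQ_eq_iff (a b : Torus) : piQ a = piQ b ↔ (a = b ∨ a = -b) :=
  ⟨fun h => Quotient.exact h, fun h => Quotient.sound h⟩

lemma piQ_neg (a : Torus) : piQ (-a) = piQ a :=
  (piQ_eq_iff _ _).2 (Or.inr rfl)

lemma finite_torsion2 : torsion2.Finite := by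
  have hfin : Set.Finite {x : UnitAddCircle | x + x = 0} := by
    have h : {x : UnitAddCircle | x + x = 0} ⊆
        {u : UnitAddCircle | addOrderOf u = 1} ∪ {u | addOrderOf u = 2} := by
      intro x hx
      have h2 : (2 : ℕ) • x = 0 := by simpa [two_nsmul] using hx
      have hd : addOrderOf x ∣ 2 := addOrderOf_dvd_iff_nsmul_eq_zero.2 h2
      exact (Nat.Prime.eq_one_or_self_of_dvd Nat.prime_two _ hd).imp id id
    exact ((AddCircle.finite_setOfPred_addOrderOf_eq (p := (1:ℝ)) one_pos).union
      (AddCircle.finite_setOfPred_addOrderOf_eq (p := (1:ℝ)) two_pos)).subset h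
  have hsub : torsion2 ⊆ {x : UnitAddCircle | x + x = 0} ×ˢ {x : UnitAddCircle | x + x = 0} := by
    rintro ⟨a, b⟩ hab
    have h1 : a + a = 0 := congrArg Prod.fst hab
    have h2 : b + b = 0 := congrArg Prod.snd hab
    exact ⟨h1, h2⟩
  exact (hfin.prod hfin).subset hsub

lemma isOpenMap_piQ : IsOpenMap piQ := by
  intro U hU
  have key : piQ ⁻¹' (piQ '' U) = U ∪ (Neg.neg ⁻¹' U) := by
    ext x
    simp only [Set.mem_preimage, Set.mem_image, Set.mem_union]
    constructor
    · rintro ⟨u, hu, huv⟩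
      rcases (piQ_eq_iff u x).1 huv with rfl | h
      · exact Or.inl hu
      · rw [h] at hu; exact Or.inr hu
    · rintro (hx | hx)
      · exact ⟨x, hx, rfl⟩
      · exact ⟨-x, hx, piQ_neg x⟩
  have hmk : Topology.IsQuotientMap piQ := isQuotientMap_quot_mk
  rw [← hmk.isOpen_preimage, key]
  exact hU.union (hU.preimage continuous_neg)

/-- For a Lattès map `f : Q → Q` with lift a covering map
`f̃ : 𝕋² → 𝕋²` all of whose fibers have exactly `d > 1` elements, the critical
values of `π` are not critical points of `f`: for every 2-torsion point `z`,
`f` is injective on some neighborhood of `π(z)`. -/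
theorem lattes_branch_values_not_critical_points
    (f : Q → Q) (hf : Continuous f)
    (ftilde : Torus → Torus) (hcov : IsCoveringMap ftilde)
    (d : ℕ) (hd : 1 < d)
    (hfib : ∀ z : Torus, (ftilde ⁻¹' {z}).ncard = d)
    (hsemi : ∀ z : Torus, piQ (ftilde z) = f (piQ z))
    (z : Torus) (hz : z ∈ torsion2) :
    ∃ U ∈ nhds (piQ z), Set.InjOn f U := by
  classical
  have hnegz : -z = z := neg_eq_of_add_eq_zero_left hz
  -- the equivariance relation
  have hrel : ∀ x : Torus, ftilde (-x) = ftilde x ∨ ftilde (-x) = -ftilde x := by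
    intro x
    have h1 : piQ (ftilde (-x)) = piQ (ftilde x) := by
      rw [hsemi, hsemi, piQ_neg]
    exact (piQ_eq_iff _ _).1 h1
  -- local injectivity of the covering
  obtain ⟨e, hze, hfe⟩ := hcov.isLocalHomeomorph z
  have hinj : Set.InjOn ftilde e.source := by rw [hfe]; exact e.injOn
  -- isolate z among torsion points
  have hNopen : IsOpen ((torsion2 \ {z})ᶜ) :=
    ((finite_torsion2.subset Set.diff_subset).isClosed).isOpen_compl
  have hzN : z ∈ (torsion2 \ {z})ᶜ := by simp
  -- construct the good neighborhood V of z
  suffices h : ∃ V : Set Torus, IsOpen V ∧ z ∈ V ∧ (∀ x ∈ V, -x ∈ V) ∧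
      Set.InjOn ftilde V ∧
      (∀ x1 ∈ V, ∀ x2 ∈ V, ftilde x1 = -ftilde x2 → x1 = x2 ∨ x1 = -x2) by
    obtain ⟨V, hVopen, hzV, hVsym, hVinj, hVkey⟩ := h
    refine ⟨piQ '' V, isOpenMap_piQ.image_mem_nhds (hVopen.mem_nhds hzV), ?_⟩
    rintro u1 ⟨x1, hx1, rfl⟩ u2 ⟨x2, hx2, rfl⟩ heq
    have h1 : piQ (ftilde x1) = piQ (ftilde x2) := by rw [hsemi, hsemi, heq]
    rcases (piQ_eq_iff _ _).1 h1 with h2 | h2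
    · rw [hVinj hx1 hx2 h2]
    · rcases hVkey x1 hx1 x2 hx2 h2 with h3 | h3
      · rw [h3]
      · rw [h3, piQ_neg]
  by_cases hw : ftilde z ∈ torsion2
  · -- image point is 2-torsion
    have hnegw : -ftilde z = ftilde z := neg_eq_of_add_eq_zero_left hw
    set A : Set Torus := e.source ∩ (torsion2 \ {z})ᶜ with hA
    have hAopen : IsOpen A := e.open_source.inter hNopen
    have hzA : z ∈ A := ⟨hze, hzN⟩
    refine ⟨A ∩ (Neg.neg ⁻¹' A), hAopen.inter (hAopen.preimage continuous_neg),
      ⟨hzA, by simpa [hnegz] using hzA⟩, ?_, hinj.mono fun x hx => hx.1.1, ?_⟩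
    · rintro x ⟨hx1, hx2⟩
      exact ⟨hx2, by simpa using hx1⟩
    · rintro x1 ⟨hx1, hx1'⟩ x2 ⟨hx2, hx2'⟩ hcontra
      rcases hrel x2 with h4 | h4
      · -- ftilde (-x2) = ftilde x2: forces x2 = z
        have hx2z : -x2 = x2 := hinj (Set.mem_preimage.1 hx2').1 hx2.1 h4
        have hx2t : x2 ∈ torsion2 := by
          have := hx2z
          simpa [torsion2, add_eq_zero_iff_neg_eq] using this
        have hx2eq : x2 = z := by
          by_contra hne
          exact hx2.2 ⟨hx2t, hne⟩
        have h5 : ftilde x1 = ftilde z := by rw [hcontra, hx2eq, hnegw]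
        exact Or.inl ((hinj hx1.1 hze h5).trans hx2eq.symm)
      · -- ftilde (-x2) = -ftilde x2
        have : ftilde x1 = ftilde (-x2) := by rw [hcontra, h4]
        exact Or.inr (hinj hx1.1 (Set.mem_preimage.1 hx2').1 this)
  · -- image point is not 2-torsion: separate ftilde z from -ftilde z
    have hne : ftilde z ≠ -ftilde z := by
      intro h
      exact hw (by simpa [torsion2, add_eq_zero_iff_eq_neg] using h)
    obtain ⟨W1, W2, hW1, hW2, hw1, hw2, hdisj⟩ := t2_separation hne
    set W : Set Torus := W1 ∩ (Neg.neg ⁻¹' W2) with hW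
    have hWopen : IsOpen W := hW1.inter (hW2.preimage continuous_neg)
    have hwW : ftilde z ∈ W := ⟨hw1, by simpa using hw2⟩
    set A : Set Torus := e.source ∩ ftilde ⁻¹' W with hA
    have hcont : Continuous ftilde := hcov.continuous
    have hAopen : IsOpen A := e.open_source.inter (hWopen.preimage hcont)
    have hzA : z ∈ A := ⟨hze, hwW⟩
    refine ⟨A ∩ (Neg.neg ⁻¹' A), hAopen.inter (hAopen.preimage continuous_neg),
      ⟨hzA, by simpa [hnegz] using hzA⟩, ?_, hinj.mono fun x hx => hx.1.1, ?_⟩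
    · rintro x ⟨hx1, hx2⟩
      exact ⟨hx2, by simpa using hx1⟩
    · rintro x1 ⟨hx1, _⟩ x2 ⟨hx2, _⟩ hcontra
      exfalso
      have h1 : ftilde x1 ∈ W1 := hx1.2.1
      have h2 : ftilde x1 ∈ W2 := by
        rw [hcontra]
        exact hx2.2.2
      exact hdisj.le_bot ⟨h1, h2⟩
end

section
/- Let f : Q → Q be a Lattès map with lift f̃ : 𝕋² → 𝕋², a covering map each of whose fibers has exactly d elements, with d > 1. Then the set of critical values of π is f-invariant: for every 2-torsion point z ∈ T, f(π(z)) ∈ π(T). -/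
/-- For a Lattès map `f : Q → Q` with lift a covering map
`f̃ : 𝕋² → 𝕋²` all of whose fibers have exactly `d > 1` elements, the set of
critical values of `π` is `f`-invariant: `f(π(T)) ⊆ π(T)`. -/
theorem lattes_branch_values_invariant
    (f : Q → Q) (hf : Continuous f)
    (ftilde : Torus → Torus) (hcov : IsCoveringMap ftilde)
    (d : ℕ) (hd : 1 < d)
    (hfib : ∀ z : Torus, (ftilde ⁻¹' {z}).ncard = d)
    (hsemi : ∀ z : Torus, piQ (ftilde z) = f (piQ z))
    (z : Torus) (hz : z ∈ torsion2) :
    f (piQ z) ∈ piQ '' torsion2 := by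
  have hzneg : -z = z := neg_eq_of_add_eq_zero_left hz
  -- key alternative: f̃(-x) = f̃(x) or f̃(-x) = -f̃(x)
  have key : ∀ x : Torus, ftilde (-x) = ftilde x ∨ ftilde (-x) = -ftilde x := by
    intro x
    have hpx : piQ (-x) = piQ x := Quotient.sound (Or.inr rfl)
    have : piQ (ftilde (-x)) = piQ (ftilde x) := by
      rw [hsemi, hsemi, hpx]
    exact Quotient.exact this
  by_cases h2 : ftilde z + ftilde z = 0
  · exact ⟨ftilde z, h2, hsemi z⟩
  · exfalso
    -- local injectivity of f̃ near z
    obtain ⟨e, hze, hfe⟩ := hcov.isLocalHomeomorph z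
    -- g x = f̃ x + f̃ (-x) is continuous and nonzero at z
    have hgc : Continuous fun x : Torus => ftilde x + ftilde (-x) :=
      (hcov.continuous).add (hcov.continuous.comp continuous_neg)
    have hgz : ftilde z + ftilde (-z) ≠ 0 := by rwa [hzneg]
    -- open neighborhood of z contained in torsion2
    set O : Set Torus :=
      ((fun x : Torus => ftilde x + ftilde (-x)) ⁻¹' {0}ᶜ) ∩ e.source ∩
        (Neg.neg ⁻¹' e.source) with hO
    have hOopen : IsOpen O :=
      (((isClosed_singleton.isOpen_compl).preimage hgc).inter e.open_source).inter
        (e.open_source.preimage continuous_neg)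
    have hzO : z ∈ O := ⟨⟨hgz, hze⟩, by rwa [Set.mem_preimage, hzneg]⟩
    have hOtor : O ⊆ torsion2 := by
      rintro x ⟨⟨hgx, hxs⟩, hnxs⟩
      have hne : ftilde (-x) ≠ -ftilde x := by
        intro h
        apply hgx
        simp [h]
      have heq : ftilde (-x) = ftilde x := (key x).resolve_right hne
      have : -x = x := by
        apply e.injOn hnxs hxs
        rw [← hfe]; exact heq
      show x + x = 0
      nth_rewrite 1 [← this]
      exact neg_add_cancel x
    -- the curve t ↦ z + (t, 0) enters O but leaves torsion2
    have hc : Continuous fun t : ℝ => z + (((t : UnitAddCircle), 0) : Torus) := by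
      exact continuous_const.add
        ((AddCircle.continuous_mk' 1).prodMk continuous_const)
    have hc0 : (fun t : ℝ => z + (((t : UnitAddCircle), 0) : Torus)) 0 = z := by
      simp
    have hnhds : (fun t : ℝ => z + (((t : UnitAddCircle), 0) : Torus)) ⁻¹' O ∈ nhds (0 : ℝ) := by
      apply hc.continuousAt.preimage_mem_nhds
      show O ∈ nhds ((fun t : ℝ => z + (((t : UnitAddCircle), 0) : Torus)) 0); rw [hc0]; exact hOopen.mem_nhds hzO
    obtain ⟨ε, hε, hball⟩ := Metric.mem_nhds_iff.mp hnhds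
    set t : ℝ := min (ε / 2) (1 / 4) with ht
    have htpos : 0 < t := lt_min (by linarith) (by norm_num)
    have htlt : t < ε := lt_of_le_of_lt (min_le_left _ _) (by linarith)
    have htlt' : t ≤ 1 / 4 := min_le_right _ _
    have htO : z + (((t : UnitAddCircle), 0) : Torus) ∈ O := by
      apply hball
      simp only [Metric.mem_ball, Real.dist_eq, sub_zero, abs_of_pos htpos]
      exact htlt
    have htor := hOtor htO
    have h : z + (((t : UnitAddCircle), 0) : Torus) + (z + ((t : UnitAddCircle), 0)) = 0 := htor
    have h' : ((((t : UnitAddCircle), 0) : Torus)) + (((t : UnitAddCircle), 0) : Torus) = 0 := by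
      have h2' : (z + z) + (((((t : UnitAddCircle), 0) : Torus)) + ((t : UnitAddCircle), 0)) = 0 := by
        rw [← h]; abel
      rwa [hz, zero_add] at h2'
    have h1 : ((t : UnitAddCircle)) + (t : UnitAddCircle) = 0 := by
      have := congrArg Prod.fst h'
      simpa using this
    have h1 : (((t + t : ℝ)) : UnitAddCircle) = 0 := by
      push_cast
      exact h1
    rw [AddCircle.coe_eq_zero_iff] at h1
    obtain ⟨n, hn⟩ := h1
    have hn' : (n : ℝ) = t + t := by simpa using hn
    have hb1 : (0 : ℝ) < n := by rw [hn']; linarith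
    have hb2 : (n : ℝ) < 1 := by rw [hn']; linarith
    have : (0 : ℤ) < n := by exact_mod_cast hb1
    have : (n : ℤ) < 1 := by exact_mod_cast hb2
    omega
end

section
/- Let Σ = (ℤ → Bool) be the full 2-shift space with the product topology and let σ : Σ → Σ be the shift homeomorphism, σ(x)(n) = x(n+1). Let Y be the suspension (mapping torus) of σ, i.e. the quotient of Σ × [0,1] by the identification (x,1) ∼ (σ(x),0). Then Y is a continuum (nonempty, compact and connected) and Y is indecomposable: Y is not the union of two compact connected proper subsets. -/
/-- The full 2-shift space `Σ = (ℤ → Bool)` with the product topology. -/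
abbrev ShiftSpace : Type := ℤ → Bool

/-- The shift homeomorphism `σ(x)(n) = x(n+1)` (as a map). -/
def shiftMap : ShiftSpace → ShiftSpace := fun x n => x (n + 1)

/-- The gluing relation for the mapping torus of the shift: `(x,1) ∼ (σ x, 0)`. -/
def suspRel : (ShiftSpace × unitInterval) → (ShiftSpace × unitInterval) → Prop :=
  fun a b => a.2 = 1 ∧ b.2 = 0 ∧ b.1 = shiftMap a.1

/-- The suspension (mapping torus) `Y` of the shift: the quotient of
`Σ × [0,1]` by the identification `(x,1) ∼ (σ x, 0)`, with the quotient
topology. -/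
abbrev SuspShift : Type := Quot suspRel

open Set

namespace Susp

/-- integer shift -/
def sh (k : ℤ) (x : ShiftSpace) : ShiftSpace := fun n => x (n + k)

@[simp] lemma sh_sh (j k : ℤ) (x : ShiftSpace) : sh j (sh k x) = sh (j + k) x := by
  funext n; simp [sh, add_assoc, add_comm j k]

@[simp] lemma sh_zero (x : ShiftSpace) : sh 0 x = x := by funext n; simp [sh]

lemma shiftMap_eq_sh : shiftMap = sh 1 := by funext x n; simp [sh, shiftMap]

lemma sh_injective (k : ℤ) : Function.Injective (sh k) := by
  intro x y h
  have := congrArg (sh (-k)) h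
  simpa using this

lemma continuous_sh (k : ℤ) : Continuous (sh k) :=
  continuous_pi fun n => continuous_apply (n + k)

lemma sh_left_inv (k : ℤ) (x : ShiftSpace) : sh (-k) (sh k x) = x := by simp

/-- the quotient map -/
def q : ShiftSpace × unitInterval → SuspShift := Quot.mk suspRel

lemma continuous_q : Continuous q := continuous_quot_mk

/-- explicit description of the equivalence generated by suspRel -/
def R (a b : ShiftSpace × unitInterval) : Prop :=
  a = b ∨ (a.2 = 1 ∧ b.2 = 0 ∧ b.1 = shiftMap a.1) ∨ (b.2 = 1 ∧ a.2 = 0 ∧ a.1 = shiftMap b.1)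

lemma zero_ne_one' : (0 : unitInterval) ≠ 1 := by
  intro h
  have := congrArg Subtype.val h
  norm_num at this

lemma R_trans {a b c : ShiftSpace × unitInterval} (h1 : R a b) (h2 : R b c) : R a c := by
  rcases h1 with rfl | ⟨ha, hb, hib⟩ | ⟨hb, ha, hia⟩
  · exact h2
  · rcases h2 with rfl | ⟨hb', hc, hic⟩ | ⟨hc, hb', hib'⟩
    · exact Or.inr (Or.inl ⟨ha, hb, hib⟩)
    · exact absurd (hb.symm.trans hb') zero_ne_one'
    · left
      have hx : a.1 = c.1 := by
        have h := hib.symm.trans hib'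
        rw [shiftMap_eq_sh] at h
        exact sh_injective 1 h
      have ht : a.2 = c.2 := ha.trans hc.symm
      exact Prod.ext hx ht
  · rcases h2 with rfl | ⟨hb', hc, hic⟩ | ⟨hc, hb', hib'⟩
    · exact Or.inr (Or.inr ⟨hb, ha, hia⟩)
    · left
      have hx : a.1 = c.1 := by rw [hia, hic]
      exact Prod.ext hx (ha.trans hc.symm)
    · exact absurd (hb'.symm.trans hb) zero_ne_one'

lemma R_refl (a : ShiftSpace × unitInterval) : R a a := Or.inl rfl

lemma R_symm {a b : ShiftSpace × unitInterval} (h : R a b) : R b a := by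
  rcases h with rfl | h | h
  · exact Or.inl rfl
  · exact Or.inr (Or.inr h)
  · exact Or.inr (Or.inl h)

/-- key: equality in the quotient is exactly R -/
lemma q_eq_iff (a b : ShiftSpace × unitInterval) : q a = q b ↔ R a b := by
  rw [q, Quot.eq]
  constructor
  · intro h
    induction h with
    | rel x y h => exact Or.inr (Or.inl h)
    | refl x => exact R_refl x
    | symm x y _ ih => exact R_symm ih
    | trans x y z _ _ ih1 ih2 => exact R_trans ih1 ih2
  · intro h
    rcases h with rfl | h | h
    · exact Relation.EqvGen.refl a
    · exact Relation.EqvGen.rel _ _ h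
    · exact Relation.EqvGen.symm _ _ (Relation.EqvGen.rel _ _ h)

/-! ### Cylinders -/

def Cyl (x : ShiftSpace) (W : Finset ℤ) : Set ShiftSpace := {y | ∀ n ∈ W, y n = x n}

lemma mem_Cyl_self (x : ShiftSpace) (W : Finset ℤ) : x ∈ Cyl x W := fun _ _ => rfl

lemma isOpen_Cyl (x : ShiftSpace) (W : Finset ℤ) : IsOpen (Cyl x W) := by
  have : Cyl x W = ⋂ n ∈ W, (fun y : ShiftSpace => y n) ⁻¹' {x n} := by
    ext y; simp [Cyl]
  rw [this]
  exact isOpen_biInter_finset fun n _ => (continuous_apply n).isOpen_preimage _ trivial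

lemma isClosed_Cyl (x : ShiftSpace) (W : Finset ℤ) : IsClosed (Cyl x W) := by
  have : Cyl x W = ⋂ n ∈ W, (fun y : ShiftSpace => y n) ⁻¹' {x n} := by
    ext y; simp [Cyl]
  rw [this]
  exact isClosed_biInter fun n _ => IsClosed.preimage (continuous_apply n) (isClosed_discrete _)

lemma Cyl_mono (x : ShiftSpace) {W W' : Finset ℤ} (h : W ⊆ W') : Cyl x W' ⊆ Cyl x W :=
  fun y hy n hn => hy n (h hn)

lemma exists_Cyl_subset {O : Set ShiftSpace} (hO : IsOpen O) {x : ShiftSpace} (hx : x ∈ O) :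
    ∃ W : Finset ℤ, Cyl x W ⊆ O := by
  rw [isOpen_pi_iff] at hO
  obtain ⟨I, u, hu, hsub⟩ := hO x hx
  exact ⟨I, fun y hy => hsub fun a ha => (hy a ha).symm ▸ (hu a ha).2⟩

lemma mem_Cyl_sh (k : ℤ) (y x : ShiftSpace) (W : Finset ℤ) :
    sh k y ∈ Cyl x W ↔ y ∈ Cyl (sh (-k) x) (W.image (· + k)) := by
  constructor
  · intro h m hm
    simp only [Finset.mem_image] at hm
    obtain ⟨n, hn, rfl⟩ := hm
    have := h n hn
    simp only [sh] at this ⊢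
    rw [this]; ring_nf
  · intro h n hn
    have := h (n + k) (Finset.mem_image_of_mem _ hn)
    simp only [sh] at this ⊢
    rw [this]; ring_nf

lemma Cyl_infinite (x : ShiftSpace) (W : Finset ℤ) : (Cyl x W).Infinite := by
  set N : ℤ := (W.sup (fun n => n.toNat) : ℕ) + 1 with hN
  have hNW : ∀ n ∈ W, n < N := by
    intro n hn
    have : n.toNat ≤ W.sup (fun n => n.toNat) := Finset.le_sup hn
    omega
  set f : ℕ → ShiftSpace := fun m => (fun n : ℤ => if n = N + m then !(x n) else x n) with hf
  have hinj : Function.Injective f := by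
    intro a b hab
    by_contra hne
    have h1 := congrFun hab (N + a)
    simp only [hf, if_pos rfl] at h1
    rw [if_neg (by omega)] at h1
    exact (Bool.not_ne_self _) h1
  have hmem : ∀ m, f m ∈ Cyl x W := by
    intro m n hn
    have : n ≠ N + m := by have := hNW n hn; omega
    simp [hf, if_neg this]
  exact Set.infinite_of_injective_forall_mem hinj hmem


/-! ### Hausdorffness of the suspension -/

/-- Bool indicator -/
def bv (c : Bool) : ℝ := if c then 1 else 0

lemma bv_injective : Function.Injective bv := by
  intro a b h
  cases a <;> cases b <;> simp [bv] at h ⊢ <;> norm_num at h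

/-- The separating map witnessing Hausdorffness. -/
noncomputable def F : ShiftSpace × unitInterval → AddCircle (1:ℝ) × (ℤ → ℝ × ℝ) := fun p =>
  (((p.2 : ℝ) : AddCircle (1:ℝ)),
    fun n => ((1 - (p.2:ℝ)) * bv (p.1 n) + (p.2:ℝ) * bv (p.1 (n+1)),
              (p.2:ℝ) * (1 - (p.2:ℝ)) * bv (p.1 n)))

lemma continuous_F : Continuous F := by
  apply Continuous.prodMk
  · exact (AddCircle.continuous_mk' (1:ℝ)).comp (continuous_subtype_val.comp continuous_snd)
  · apply continuous_pi
    intro n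
    have hx : ∀ m : ℤ, Continuous (fun p : ShiftSpace × unitInterval => bv (p.1 m)) := by
      intro m
      have : (fun p : ShiftSpace × unitInterval => bv (p.1 m))
          = bv ∘ ((fun z : ShiftSpace => z m) ∘ Prod.fst) := rfl
      rw [this]
      exact continuous_of_discreteTopology.comp ((continuous_apply m).comp continuous_fst)
    have ht : Continuous (fun p : ShiftSpace × unitInterval => (p.2 : ℝ)) :=
      continuous_subtype_val.comp continuous_snd
    exact ((((continuous_const.sub ht).mul (hx n)).add (ht.mul (hx (n+1)))).prodMk
      ((ht.mul (continuous_const.sub ht)).mul (hx n)))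

lemma F_resp : ∀ a b, suspRel a b → F a = F b := by
  rintro ⟨x, t⟩ ⟨y, s⟩ ⟨h1, h2, h3⟩
  simp only at h1 h2 h3
  subst h1; subst h2; subst h3
  apply Prod.ext
  · show ((((1:unitInterval) : ℝ)) : AddCircle (1:ℝ)) = (((0:unitInterval) : ℝ) : AddCircle (1:ℝ))
    have e1 : ((1:unitInterval) : ℝ) = 1 := rfl
    have e0 : ((0:unitInterval) : ℝ) = 0 := rfl
    rw [e1, e0, QuotientAddGroup.eq]
    exact ⟨-1, by simp⟩
  · funext n
    simp only [F, shiftMap]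
    have e1 : ((1:unitInterval) : ℝ) = 1 := rfl
    have e0 : ((0:unitInterval) : ℝ) = 0 := rfl
    rw [e1, e0]
    norm_num

lemma F_inj {a b : ShiftSpace × unitInterval} (h : F a = F b) : R a b := by
  obtain ⟨x, t⟩ := a; obtain ⟨y, s⟩ := b
  have h1 : (((t:ℝ)) : AddCircle (1:ℝ)) = ((s:ℝ) : AddCircle (1:ℝ)) := congrArg Prod.fst h
  have h2 := congrArg Prod.snd h
  simp only [F] at h2
  rw [QuotientAddGroup.eq] at h1
  obtain ⟨k, hk⟩ := AddSubgroup.mem_zmultiples_iff.mp h1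
  rw [zsmul_eq_mul, mul_one] at hk
  have hk' : (s:ℝ) - (t:ℝ) = k := by linarith
  have ht0 := t.2.1; have ht1 := t.2.2; have hs0 := s.2.1; have hs1 := s.2.2
  have hkcases : k = 0 ∨ k = 1 ∨ k = -1 := by
    have hb1 : (-1:ℝ) ≤ (k:ℝ) := by linarith
    have hb2 : (k:ℝ) ≤ 1 := by linarith
    have h1' : (-1:ℤ) ≤ k := by exact_mod_cast hb1
    have h2' : k ≤ 1 := by exact_mod_cast hb2
    omega
  have key1 : ∀ n : ℤ, (1 - (t:ℝ)) * bv (x n) + (t:ℝ) * bv (x (n+1))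
      = (1 - (s:ℝ)) * bv (y n) + (s:ℝ) * bv (y (n+1)) :=
    fun n => congrArg Prod.fst (congrFun h2 n)
  have key2 : ∀ n : ℤ, (t:ℝ) * (1 - (t:ℝ)) * bv (x n) = (s:ℝ) * (1 - (s:ℝ)) * bv (y n) :=
    fun n => congrArg Prod.snd (congrFun h2 n)
  rcases hkcases with hk0 | hk1 | hkm
  · -- t = s
    have htsR : (t:ℝ) = (s:ℝ) := by rw [hk0] at hk'; push_cast at hk'; linarith
    have hts : t = s := Subtype.ext htsR
    subst hts
    left
    refine Prod.ext ?_ rfl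
    funext n
    rcases eq_or_lt_of_le ht0 with h0 | hpos
    · -- t = 0
      apply bv_injective
      have := key1 n
      rw [← h0] at this
      simpa using this
    · rcases eq_or_lt_of_le ht1 with h1' | hlt
      · -- t = 1
        apply bv_injective
        have := key1 (n - 1)
        rw [h1'] at this
        simp only [sub_self, zero_mul, zero_add, one_mul] at this
        have e2 : n - 1 + 1 = n := by ring
        rw [e2] at this
        exact this
      · -- 0 < t < 1
        have hne : (t:ℝ) * (1 - (t:ℝ)) ≠ 0 := ne_of_gt (by nlinarith)
        exact bv_injective (mul_left_cancel₀ hne (key2 n))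
  · -- s = 1, t = 0
    have hs' : (s:ℝ) = 1 := by rw [hk1] at hk'; push_cast at hk'; linarith
    have ht' : (t:ℝ) = 0 := by rw [hk1] at hk'; push_cast at hk'; linarith
    right; right
    refine ⟨Subtype.ext (show (s:ℝ) = ((1:unitInterval):ℝ) by rw [hs']; rfl),
      Subtype.ext (show (t:ℝ) = ((0:unitInterval):ℝ) by rw [ht']; rfl), ?_⟩
    funext n
    have := key1 n
    rw [ht', hs'] at this
    simp only [sub_zero, one_mul, zero_mul, add_zero, sub_self, zero_add] at this
    exact bv_injective this
  · -- t = 1, s = 0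
    have ht' : (t:ℝ) = 1 := by rw [hkm] at hk'; push_cast at hk'; linarith
    have hs' : (s:ℝ) = 0 := by rw [hkm] at hk'; push_cast at hk'; linarith
    right; left
    refine ⟨Subtype.ext (show (t:ℝ) = ((1:unitInterval):ℝ) by rw [ht']; rfl),
      Subtype.ext (show (s:ℝ) = ((0:unitInterval):ℝ) by rw [hs']; rfl), ?_⟩
    funext n
    have := key1 n
    rw [ht', hs'] at this
    simp only [sub_self, zero_mul, zero_add, one_mul, sub_zero, add_zero] at this
    exact (bv_injective this).symm

/-- the lifted separating map -/
noncomputable def Fq : SuspShift → AddCircle (1:ℝ) × (ℤ → ℝ × ℝ) := Quot.lift F F_resp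

lemma continuous_Fq : Continuous Fq := continuous_quot_lift _ continuous_F

lemma Fq_inj : Function.Injective Fq := by
  intro a b
  obtain ⟨a', rfl⟩ := Quot.exists_rep a
  obtain ⟨b', rfl⟩ := Quot.exists_rep b
  intro h
  exact (q_eq_iff a' b').mpr (F_inj h)

instance : T2Space SuspShift := by
  refine ⟨fun a b hab => ?_⟩
  obtain ⟨u, v, hu, hv, hau, hbv, huv⟩ := t2_separation (fun h => hab (Fq_inj h))
  exact ⟨Fq ⁻¹' u, Fq ⁻¹' v, hu.preimage continuous_Fq, hv.preimage continuous_Fq,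
    hau, hbv, huv.preimage _⟩


/-! ### Boxes -/

/-- open time slice -/
def Tio (c d : ℝ) : Set unitInterval := {t : unitInterval | c < t.1 ∧ t.1 < d}

lemma isOpen_Tio (c d : ℝ) : IsOpen (Tio c d) := by
  have : Tio c d = (fun t : unitInterval => (t : ℝ)) ⁻¹' (Set.Ioo c d) := by
    ext t; simp [Tio, Set.mem_Ioo]
  rw [this]
  exact isOpen_Ioo.preimage continuous_subtype_val

/-- a box with open cylinder base and time interval inside (0,1) is open in the quotient -/
lemma isOpen_box {V : Set ShiftSpace} (hV : IsOpen V) {c d : ℝ} (hc : 0 < c) (hd : d < 1) :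
    IsOpen (q '' (V ×ˢ Tio c d)) := by
  rw [isOpen_coinduced (f := Quot.mk suspRel)]
  have hsat : (Quot.mk suspRel) ⁻¹' (q '' (V ×ˢ Tio c d)) = V ×ˢ Tio c d := by
    ext ⟨a, b⟩
    constructor
    · rintro ⟨⟨v, t⟩, ⟨hv, ht⟩, hq⟩
      rcases (q_eq_iff _ _).mp hq with heq | ⟨h1, h2, h3⟩ | ⟨h1, h2, h3⟩
      · rw [← heq]; exact ⟨hv, ht⟩
      · exfalso
        have ht1 : (t : ℝ) = 1 := congrArg Subtype.val h1
        exact absurd ht1 (ne_of_lt (lt_trans ht.2 hd))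
      · exfalso
        have ht0 : (t : ℝ) = 0 := congrArg Subtype.val h2
        exact absurd ht0 (ne_of_gt (lt_trans hc ht.1))
    · intro h
      exact ⟨(a, b), h, rfl⟩
  rw [hsat]
  exact hV.prod (isOpen_Tio c d)

/-- injectivity of q at interior times -/
lemma q_inj_interior {v w : ShiftSpace} {t t' : unitInterval}
    (ht : 0 < (t:ℝ)) (ht' : (t:ℝ) < 1) (h : q (v, t) = q (w, t')) : v = w ∧ t = t' := by
  rcases (q_eq_iff _ _).mp h with heq | ⟨h1, _, _⟩ | ⟨_, h2, _⟩
  · exact ⟨congrArg Prod.fst heq, congrArg Prod.snd heq⟩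
  · exact absurd (congrArg Subtype.val h1) (by simp only []; intro hh; rw [hh] at ht'; norm_num at ht')
  · exact absurd (congrArg Subtype.val h2) (by simp only []; intro hh; rw [hh] at ht; norm_num at ht)

/-- every point of the unit interval has arbitrarily fine interior interval approximations -/
lemma interval_approx (b : unitInterval) {ε : ℝ} (hε : 0 < ε) :
    ∃ c d : ℝ, 0 < c ∧ c < d ∧ d < 1 ∧ ∀ r : ℝ, c < r → r < d → |r - (b:ℝ)| < ε := by
  have hb0 := b.2.1
  have hb1 := b.2.2
  set m := min ε 1 with hm
  have hm0 : 0 < m := by positivity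
  have hmε : m ≤ ε := min_le_left _ _
  have hm1 : m ≤ 1 := min_le_right _ _
  rcases eq_or_lt_of_le hb0 with h0 | h0
  · exact ⟨m/3, m/2, by linarith, by linarith, by linarith,
      fun r h1 h2 => by rw [← h0]; rw [abs_of_pos (by linarith)]; linarith⟩
  rcases eq_or_lt_of_le hb1 with h1 | h1
  · exact ⟨1 - m/2, 1 - m/3, by linarith, by linarith, by linarith,
      fun r hr1 hr2 => by rw [h1]; rw [abs_of_nonpos (by linarith)]; linarith⟩
  · refine ⟨max ((b:ℝ)/2) ((b:ℝ) - ε), min (((b:ℝ)+1)/2) ((b:ℝ) + ε), ?_, ?_, ?_, ?_⟩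
    · have : (0:ℝ) < (b:ℝ)/2 := by linarith
      exact lt_max_of_lt_left this
    · apply max_lt <;> apply lt_min <;> linarith
    · exact min_lt_of_left_lt (by linarith)
    · intro r hr1 hr2
      have ha := lt_of_le_of_lt (le_max_right _ _) hr1
      have hb' := lt_of_lt_of_le hr2 (min_le_right _ _)
      rw [abs_lt]; constructor <;> linarith

/-- From a nonempty open set in the suspension, extract a cylinder box contained in it. -/
lemma box_from_open {O : Set SuspShift} (hO : IsOpen O) (hne : O.Nonempty) :
    ∃ (z : ShiftSpace) (W : Finset ℤ) (c d : ℝ), 0 < c ∧ c < d ∧ d < 1 ∧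
      ∀ v ∈ Cyl z W, ∀ t : unitInterval, c < (t:ℝ) → (t:ℝ) < d → q (v, t) ∈ O := by
  obtain ⟨y, hy⟩ := hne
  obtain ⟨⟨a, b⟩, rfl⟩ := Quot.exists_rep y
  have hpre : IsOpen ((Quot.mk suspRel) ⁻¹' O) := hO.preimage continuous_quot_mk
  have hmem : (a, b) ∈ (Quot.mk suspRel) ⁻¹' O := hy
  rw [isOpen_prod_iff] at hpre
  obtain ⟨u, v, hu, hv, hau, hbv, huv⟩ := hpre a b hmem
  obtain ⟨W, hW⟩ := exists_Cyl_subset hu hau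
  obtain ⟨ε, hε, hball⟩ := Metric.isOpen_iff.mp hv b hbv
  obtain ⟨c, d, hc, hcd, hd, happ⟩ := interval_approx b hε
  refine ⟨a, W, c, d, hc, hcd, hd, fun w hw t h1 h2 => ?_⟩
  have htv : t ∈ v := by
    apply hball
    rw [Metric.mem_ball, Subtype.dist_eq, Real.dist_eq]
    exact happ t h1 h2
  exact huv ⟨hW hw, htv⟩


/-! ### A bi-transitive point in a prescribed cylinder -/

noncomputable instance : Denumerable (List Bool) := Denumerable.ofEncodableOfInfinite _

/-- enumeration of words with each word occurring at arbitrarily large indices -/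
noncomputable def wd (j : ℕ) : List Bool := (Denumerable.eqv (List Bool)).symm (Nat.unpair j).2

lemma wd_surj_large (w : List Bool) (J : ℕ) : ∃ j ≥ J, wd j = w := by
  refine ⟨Nat.pair J (Denumerable.eqv (List Bool) w), Nat.left_le_pair _ _, ?_⟩
  simp [wd, Nat.unpair_pair]

/-- block offsets -/
noncomputable def off : ℕ → ℕ
  | 0 => 0
  | j + 1 => off j + (wd j).length + 1

lemma off_lt_succ (j : ℕ) : off j < off (j + 1) := by simp [off]

lemma off_mono : StrictMono off := strictMono_nat_of_lt_succ off_lt_succ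

lemma off_ge (j : ℕ) : j ≤ off j := by
  induction j with
  | zero => simp [off]
  | succ n ih => have := off_lt_succ n; omega

/-- the right-infinite concatenation of all words -/
noncomputable def rightSeq (p : ℕ) : Bool :=
  (wd (Nat.findGreatest (fun j => off j ≤ p) p)).getD
    (p - off (Nat.findGreatest (fun j => off j ≤ p) p)) false

lemma rightSeq_spec (j i : ℕ) (hi : i < (wd j).length) :
    rightSeq (off j + i) = (wd j).getD i false := by
  have hP : off j ≤ off j + i := Nat.le_add_right _ _
  have hjp : j ≤ off j + i := le_trans (off_ge j) hP
  have hJeq : Nat.findGreatest (fun m => off m ≤ off j + i) (off j + i) = j := by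
    have hPJ : off (Nat.findGreatest (fun m => off m ≤ off j + i) (off j + i)) ≤ off j + i :=
      Nat.findGreatest_spec (P := fun m => off m ≤ off j + i) hjp hP
    have hJj : j ≤ Nat.findGreatest (fun m => off m ≤ off j + i) (off j + i) := by
      by_contra hlt
      push_neg at hlt
      exact absurd hP (Nat.findGreatest_is_greatest (P := fun m => off m ≤ off j + i) (n := off j + i) hlt hjp)
    rcases eq_or_lt_of_le hJj with h | h
    · omega
    · exfalso
      have h2 : off (j+1) ≤ off (Nat.findGreatest (fun m => off m ≤ off j + i) (off j + i)) :=
        off_mono.monotone h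
      rw [off] at h2
      omega
  rw [rightSeq]
  rw [hJeq]
  congr 1
  omega

lemma getD_ofFn {m : ℕ} (f : Fin m → Bool) (i : ℕ) (h : i < m) :
    (List.ofFn f).getD i false = f ⟨i, h⟩ := by
  rw [List.getD_eq_getElem _ _ (by simpa using h)]
  simp

/-- the bi-transitive point agreeing with `x` on `[-N, N]` -/
noncomputable def xstar (x : ShiftSpace) (N : ℕ) : ShiftSpace := fun n =>
  if n.natAbs ≤ N then x n
  else if 0 < n then rightSeq (n - N - 1).toNat
  else rightSeq (-n - N - 1).toNat

lemma xstar_mem_Cyl (x : ShiftSpace) (N : ℕ) (W : Finset ℤ)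
    (hW : ∀ m ∈ W, m.natAbs ≤ N) : xstar x N ∈ Cyl x W := by
  intro m hm
  simp [xstar, if_pos (hW m hm)]

lemma xstar_fwd (x : ShiftSpace) (N : ℕ) (z : ShiftSpace) (M : ℕ) (K : ℤ) :
    ∃ k : ℤ, K ≤ k ∧ ∀ n : ℤ, n.natAbs ≤ M → xstar x N (n + k) = z n := by
  obtain ⟨j, hj, hwj⟩ := wd_surj_large (List.ofFn (fun i : Fin (2*M+1) => z ((i:ℤ) - M))) K.toNat
  have hoj : j ≤ off j := off_ge j
  refine ⟨(N:ℤ) + 1 + (off j : ℤ) + M, by omega, ?_⟩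
  intro n hn
  set k : ℤ := (N:ℤ) + 1 + (off j : ℤ) + M with hk
  have hx1 : xstar x N (n + k) = rightSeq (n + k - N - 1).toNat := by
    rw [xstar]
    rw [if_neg (by omega), if_pos (by omega)]
  have harith : (n + k - N - 1).toNat = off j + (n + M).toNat := by omega
  have hlen : ((n + M).toNat) < (wd j).length := by
    rw [hwj, List.length_ofFn]
    omega
  have hlen2 : ((n + M).toNat) < 2*M+1 := by omega
  rw [hx1, harith, rightSeq_spec j _ hlen, hwj, getD_ofFn _ _ hlen2]
  congr 1
  push_cast
  omega

lemma xstar_bwd (x : ShiftSpace) (N : ℕ) (z : ShiftSpace) (M : ℕ) (K : ℤ) :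
    ∃ k : ℤ, k ≤ K ∧ ∀ n : ℤ, n.natAbs ≤ M → xstar x N (n + k) = z n := by
  obtain ⟨j, hj, hwj⟩ := wd_surj_large (List.ofFn (fun i : Fin (2*M+1) => z ((M:ℤ) - i))) (-K).toNat
  have hoj : j ≤ off j := off_ge j
  refine ⟨-((N:ℤ) + 1 + (off j : ℤ) + M), by omega, ?_⟩
  intro n hn
  set k : ℤ := -((N:ℤ) + 1 + (off j : ℤ) + M) with hk
  have hx1 : xstar x N (n + k) = rightSeq (-(n + k) - N - 1).toNat := by
    rw [xstar]
    rw [if_neg (by omega), if_neg (by omega)]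
  have harith : (-(n + k) - N - 1).toNat = off j + (M - n).toNat := by omega
  have hlen : ((M - n).toNat) < (wd j).length := by
    rw [hwj, List.length_ofFn]
    omega
  have hlen2 : ((M - n).toNat) < 2*M+1 := by omega
  rw [hx1, harith, rightSeq_spec j _ hlen, hwj, getD_ofFn _ _ hlen2]
  congr 1
  push_cast
  omega

/-- cylinder-hitting versions -/
lemma xstar_hits_fwd (x : ShiftSpace) (N : ℕ) (z : ShiftSpace) (W : Finset ℤ) (K : ℤ) :
    ∃ k : ℤ, K ≤ k ∧ sh k (xstar x N) ∈ Cyl z W := by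
  set M : ℕ := W.sup (fun n => n.natAbs) with hM
  obtain ⟨k, hk, hkk⟩ := xstar_fwd x N z M K
  refine ⟨k, hk, fun n hn => ?_⟩
  exact hkk n (Finset.le_sup (f := fun n => n.natAbs) hn)

lemma xstar_hits_bwd (x : ShiftSpace) (N : ℕ) (z : ShiftSpace) (W : Finset ℤ) (K : ℤ) :
    ∃ k : ℤ, k ≤ K ∧ sh k (xstar x N) ∈ Cyl z W := by
  set M : ℕ := W.sup (fun n => n.natAbs) with hM
  obtain ⟨k, hk, hkk⟩ := xstar_bwd x N z M K
  refine ⟨k, hk, fun n hn => ?_⟩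
  exact hkk n (Finset.le_sup (f := fun n => n.natAbs) hn)


/-! ### extracting tube ends near a point outside a closed set -/

lemma prod_nbhd {S : Set (ShiftSpace × unitInterval)} (hS : IsOpen S) {a : ShiftSpace}
    {b : unitInterval} (h : (a, b) ∈ S) :
    ∃ (W : Finset ℤ) (ε : ℝ), 0 < ε ∧
      ∀ v ∈ Cyl a W, ∀ t : unitInterval, |(t:ℝ) - (b:ℝ)| < ε → (v, t) ∈ S := by
  rw [isOpen_prod_iff] at hS
  obtain ⟨u, v, hu, hv, hau, hbv, huv⟩ := hS a b h
  obtain ⟨W, hW⟩ := exists_Cyl_subset hu hau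
  obtain ⟨ε, hε, hball⟩ := Metric.isOpen_iff.mp hv b hbv
  refine ⟨W, ε, hε, fun w hw t ht => huv ⟨hW hw, hball ?_⟩⟩
  rw [Metric.mem_ball, Subtype.dist_eq, Real.dist_eq]
  exact ht

lemma q_seam (x : ShiftSpace) (k : ℤ) : q (sh k x, 1) = q (sh (k+1) x, 0) := by
  apply (q_eq_iff _ _).mpr
  right; left
  refine ⟨rfl, rfl, ?_⟩
  show sh (k+1) x = shiftMap (sh k x)
  rw [shiftMap_eq_sh, sh_sh, add_comm]

lemma end_extract {K : Set SuspShift} (hK : IsClosed K) (x : ShiftSpace) {k : ℤ}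
    {t : unitInterval} (h : q (sh k x, t) ∉ K) {ρ : ℝ} (hρ : 0 < ρ) :
    ∃ (m : ℤ) (cc : ℝ) (Wm : Finset ℤ), k ≤ m ∧ m ≤ k + 1 ∧ 0 < cc ∧ cc < 1 ∧
      (m = k + 1 → cc < ρ) ∧
      ∀ v ∈ Cyl x Wm, ∀ s : unitInterval, (s:ℝ) = cc → q (sh m v, s) ∉ K := by
  have hpre : IsOpen ((Quot.mk suspRel) ⁻¹' Kᶜ) := hK.isOpen_compl.preimage continuous_quot_mk
  -- helper to convert cylinder memberships
  have hconv : ∀ (m : ℤ) (W' : Finset ℤ) (v : ShiftSpace),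
      v ∈ Cyl x (W'.image (· + m)) → sh m v ∈ Cyl (sh m x) W' := by
    intro m W' v hv
    rw [mem_Cyl_sh m v (sh m x) W']
    have : sh (-m) (sh m x) = x := by rw [sh_sh]; simp
    rw [this]
    exact hv
  -- seam-time case handler
  have seam_case : ∀ (m : ℤ), q (sh m x, 0) ∉ K →
      ∃ (cc : ℝ) (Wm : Finset ℤ), 0 < cc ∧ cc < 1 ∧ cc < ρ ∧
        ∀ v ∈ Cyl x Wm, ∀ s : unitInterval, (s:ℝ) = cc → q (sh m v, s) ∉ K := by
    intro m hm
    obtain ⟨W', ε, hε, hW'⟩ := prod_nbhd hpre (a := sh m x) (b := 0) hm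
    set cc := min ε (min ρ 1) / 2 with hcc
    refine ⟨cc, W'.image (· + m), by positivity, ?_, ?_, ?_⟩
    · have h1 : cc ≤ 1/2 := by
        rw [hcc]
        have : min ε (min ρ 1) ≤ 1 := le_trans (min_le_right _ _) (min_le_right _ _)
        linarith
      linarith
    · have : min ε (min ρ 1) ≤ ρ := le_trans (min_le_right _ _) (min_le_left _ _)
      rw [hcc]; linarith
    · intro v hv s hs
      have hmem := hW' (sh m v) (hconv m W' v hv) s ?_
      · exact hmem
      · have h0 : ((0:unitInterval):ℝ) = 0 := rfl
        rw [hs, h0, sub_zero]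
        have h1 : cc ≤ ε / 2 := by
          rw [hcc]
          have : min ε (min ρ 1) ≤ ε := min_le_left _ _
          linarith
        rw [abs_of_pos (by positivity)]
        linarith
  rcases eq_or_lt_of_le t.2.1 with ht0 | ht0
  · -- t = 0
    have ht : t = 0 := Subtype.ext ht0.symm
    rw [ht] at h
    obtain ⟨cc, Wm, h1, h2, h3, h4⟩ := seam_case k h
    exact ⟨k, cc, Wm, le_refl _, by omega, h1, h2, fun hmk => absurd hmk (by omega), h4⟩
  rcases eq_or_lt_of_le t.2.2 with ht1 | ht1
  · -- t = 1
    have ht : t = 1 := Subtype.ext ht1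
    rw [ht, q_seam] at h
    obtain ⟨cc, Wm, h1, h2, h3, h4⟩ := seam_case (k+1) h
    exact ⟨k+1, cc, Wm, by omega, le_refl _, h1, h2, fun _ => h3, h4⟩
  · -- 0 < t < 1
    obtain ⟨W', ε, hε, hW'⟩ := prod_nbhd hpre (a := sh k x) (b := t) h
    refine ⟨k, (t:ℝ), W'.image (· + k), le_refl _, by omega, ht0, ht1,
      fun hmk => absurd hmk (by omega), ?_⟩
    intro v hv s hs
    apply hW' (sh k v) (hconv k W' v hv) s
    rw [hs, sub_self, abs_zero]
    exact hε


/-! ### tubes -/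

/-- closed tube: union of orbit segments over `U` for times in `[mm+cm, mp+cp]` -/
def tube (U : Set ShiftSpace) (mm mp : ℤ) (cm cp : ℝ) : Set SuspShift :=
  ⋃ k ∈ Finset.Icc mm mp,
    q '' ((sh k '' U) ×ˢ {t : unitInterval | mm + cm ≤ k + (t:ℝ) ∧ k + (t:ℝ) ≤ mp + cp})

/-- open tube -/
def opentube (U : Set ShiftSpace) (mm mp : ℤ) (cm cp : ℝ) : Set SuspShift :=
  {y | ∃ (k : ℤ) (v : ShiftSpace) (t : unitInterval), v ∈ U ∧
    mm + cm < k + (t:ℝ) ∧ k + (t:ℝ) < mp + cp ∧ y = q (sh k v, t)}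

/-- ends of the tube -/
def tubeEnd (U : Set ShiftSpace) (m : ℤ) (cc : ℝ) : Set SuspShift :=
  {y | ∃ v ∈ U, ∃ t : unitInterval, (t:ℝ) = cc ∧ y = q (sh m v, t)}

/-- a single orbit segment -/
def seg (x : ShiftSpace) (mm mp : ℤ) (cm cp : ℝ) : Set SuspShift :=
  {y | ∃ (k : ℤ) (t : unitInterval), mm + cm ≤ k + (t:ℝ) ∧ k + (t:ℝ) ≤ mp + cp ∧
    y = q (sh k x, t)}

lemma isClosed_tube {U : Set ShiftSpace} (hU : IsCompact U) (mm mp : ℤ) (cm cp : ℝ) :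
    IsClosed (tube U mm mp cm cp) := by
  apply Set.Finite.isClosed_biUnion (Finset.finite_toSet _)
  intro k _
  apply IsCompact.isClosed
  apply IsCompact.image _ continuous_q
  apply IsCompact.prod (hU.image (continuous_sh k))
  apply IsClosed.isCompact
  have : {t : unitInterval | mm + cm ≤ k + (t:ℝ) ∧ k + (t:ℝ) ≤ mp + cp}
      = (fun t : unitInterval => (t:ℝ)) ⁻¹' (Set.Icc (mm + cm - k) (mp + cp - k)) := by
    ext t; simp only [Set.mem_setOf_eq, Set.mem_preimage, Set.mem_Icc]; constructor <;>
      (intro h; constructor <;> linarith [h.1, h.2])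
  rw [this]
  exact isClosed_Icc.preimage continuous_subtype_val

lemma sh_image_eq_preimage (k : ℤ) (U : Set ShiftSpace) : sh k '' U = sh (-k) ⁻¹' U := by
  ext w
  constructor
  · rintro ⟨v, hv, rfl⟩
    show sh (-k) (sh k v) ∈ U
    rw [sh_sh]; simpa using hv
  · intro hw
    exact ⟨sh (-k) w, hw, by rw [sh_sh]; simp⟩

lemma q_eq_cases {a : ShiftSpace} {b : unitInterval} {w : ShiftSpace} {t : unitInterval}
    (h : q (a, b) = q (w, t)) :
    (a = w ∧ b = t) ∨ (b = 1 ∧ t = 0 ∧ w = shiftMap a) ∨ (t = 1 ∧ b = 0 ∧ a = shiftMap w) := by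
  rcases (q_eq_iff _ _).mp h with he | h2 | h3
  · exact Or.inl ⟨congrArg Prod.fst he, congrArg Prod.snd he⟩
  · exact Or.inr (Or.inl ⟨h2.1, h2.2.1, h2.2.2⟩)
  · exact Or.inr (Or.inr ⟨h3.1, h3.2.1, h3.2.2⟩)

lemma sh_cancel {a v : ShiftSpace} {j k : ℤ} (h : sh j a = sh k v) : a = sh (k - j) v := by
  have h2 := congrArg (sh (-j)) h
  rw [sh_sh, sh_sh] at h2
  rw [(by omega : -j + j = 0), sh_zero] at h2
  rw [(by omega : k - j = -j + k)]
  exact h2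

lemma unit_one_coe : ((1:unitInterval):ℝ) = 1 := rfl
lemma unit_zero_coe : ((0:unitInterval):ℝ) = 0 := rfl

lemma isOpen_opentube {U : Set ShiftSpace} (hU : IsOpen U) (mm mp : ℤ) (cm cp : ℝ) :
    IsOpen (opentube U mm mp cm cp) := by
  rw [isOpen_coinduced (f := Quot.mk suspRel)]
  have hpre : (Quot.mk suspRel) ⁻¹' (opentube U mm mp cm cp) =
      ⋃ k : ℤ, (sh k '' U) ×ˢ {t : unitInterval | mm + cm < k + (t:ℝ) ∧ k + (t:ℝ) < mp + cp} := by
    ext ⟨a, b⟩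
    constructor
    · rintro ⟨k, v, t, hv, h1, h2, heq⟩
      have hqe : q (a, b) = q (sh k v, t) := heq
      rcases q_eq_cases hqe with ⟨ha, hb⟩ | ⟨hb1, ht0, hsv⟩ | ⟨ht1, hb0, hav⟩
      · refine Set.mem_iUnion.mpr ⟨k, ⟨ha ▸ ⟨v, hv, rfl⟩, ?_, ?_⟩⟩ <;> rw [hb] <;> assumption
      · -- b = 1, t = 0, sh k v = shiftMap a
        refine Set.mem_iUnion.mpr ⟨k - 1, ?_⟩
        have ha : a = sh (k-1) v := by
          have h3 : sh 1 a = sh k v := by rw [← shiftMap_eq_sh, ← hsv]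
          simpa using sh_cancel h3
        have hb1' : (b : ℝ) = 1 := by rw [hb1]; exact unit_one_coe
        have ht0' : (t : ℝ) = 0 := by rw [ht0]; exact unit_zero_coe
        refine ⟨ha ▸ ⟨v, hv, rfl⟩, ?_, ?_⟩ <;>
          (show _ ; rw [hb1'] ; rw [ht0'] at h1 h2 ; push_cast ; push_cast at h1 h2 ; linarith)
      · -- t = 1, b = 0, a = shiftMap (sh k v)
        refine Set.mem_iUnion.mpr ⟨k + 1, ?_⟩
        have ha : a = sh (k+1) v := by
          rw [hav, shiftMap_eq_sh, sh_sh, (by omega : (1:ℤ) + k = k + 1)]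
        have hb0' : (b : ℝ) = 0 := by rw [hb0]; exact unit_zero_coe
        have ht1' : (t : ℝ) = 1 := by rw [ht1]; exact unit_one_coe
        refine ⟨ha ▸ ⟨v, hv, rfl⟩, ?_, ?_⟩ <;>
          (show _ ; rw [hb0'] ; rw [ht1'] at h1 h2 ; push_cast ; push_cast at h1 h2 ; linarith)
    · intro hab
      obtain ⟨k, hk⟩ := Set.mem_iUnion.mp hab
      obtain ⟨⟨v, hv, hva⟩, h1, h2⟩ := hk
      exact ⟨k, v, b, hv, h1, h2, congrArg (Quot.mk suspRel) (Prod.ext hva.symm rfl)⟩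
  rw [hpre]
  apply isOpen_iUnion
  intro k
  apply IsOpen.prod
  · rw [sh_image_eq_preimage]
    exact hU.preimage (continuous_sh (-k))
  · have : {t : unitInterval | mm + cm < k + (t:ℝ) ∧ k + (t:ℝ) < mp + cp}
        = (fun t : unitInterval => (t:ℝ)) ⁻¹' (Set.Ioo (mm + cm - k) (mp + cp - k)) := by
      ext t; simp only [Set.mem_setOf_eq, Set.mem_preimage, Set.mem_Ioo]; constructor <;>
        (intro h; constructor <;> linarith [h.1, h.2])
    rw [this]
    exact isOpen_Ioo.preimage continuous_subtype_val

lemma int_bounds {k mm mp : ℤ} {cm cp r : ℝ} (hcm : 0 < cm) (hcp : cp < 1)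
    (h1 : (mm:ℝ) + cm < k + r) (h2 : (k:ℝ) + r < mp + cp) (hr0 : 0 ≤ r) (hr1 : r ≤ 1) :
    mm ≤ k ∧ k ≤ mp := by
  constructor
  · have h3 : (mm:ℝ) < k + 1 := by linarith
    have h4 : mm < k + 1 := by exact_mod_cast h3
    omega
  · have h3 : (k:ℝ) < mp + 1 := by linarith
    have h4 : k < mp + 1 := by exact_mod_cast h3
    omega

lemma opentube_subset_tube {U : Set ShiftSpace} {mm mp : ℤ} {cm cp : ℝ}
    (hcm : 0 < cm) (hcp : cp < 1) :
    opentube U mm mp cm cp ⊆ tube U mm mp cm cp := by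
  rintro y ⟨k, v, t, hv, h1, h2, rfl⟩
  obtain ⟨hk1, hk2⟩ := int_bounds hcm hcp h1 h2 t.2.1 t.2.2
  apply Set.mem_biUnion (Finset.mem_Icc.mpr ⟨hk1, hk2⟩)
  exact ⟨(sh k v, t), ⟨⟨v, hv, rfl⟩, le_of_lt h1, le_of_lt h2⟩, rfl⟩

lemma tube_subset {U : Set ShiftSpace} {mm mp : ℤ} {cm cp : ℝ}
    (hcm : 0 < cm) (hcm1 : cm < 1) (hcp : 0 < cp) (hcp1 : cp < 1) :
    tube U mm mp cm cp ⊆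
      opentube U mm mp cm cp ∪ tubeEnd U mm cm ∪ tubeEnd U mp cp := by
  intro y hy
  simp only [tube, Set.mem_iUnion] at hy
  obtain ⟨k, hk, ⟨w, t⟩, ⟨⟨v, hv, hw⟩, h1, h2⟩, hq⟩ := hy
  rw [Finset.mem_Icc] at hk
  rcases eq_or_lt_of_le h1 with he1 | hlt1
  · -- k + t = mm + cm : left end
    have hkm : k = mm ∧ (t:ℝ) = cm := by
      constructor
      · have hle : (k:ℝ) ≤ mm + cm := by linarith [t.2.1]
        have : (k:ℝ) < mm + 1 := by linarith
        have : k < mm + 1 := by exact_mod_cast this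
        omega
      · have : (k:ℝ) = mm := by
          have h3 : (mm:ℝ) ≤ k := by exact_mod_cast hk.1
          have h4 : (k:ℝ) ≤ mm + cm := by linarith [t.2.1]
          have h5 : (k:ℝ) < mm + 1 := by linarith
          have h6 : k < mm + 1 := by exact_mod_cast h5
          have h7 : k ≤ mm := by omega
          have h8 : (k:ℝ) ≤ mm := by exact_mod_cast h7
          linarith
        linarith
    refine Or.inl (Or.inr ⟨v, hv, t, hkm.2, ?_⟩)
    rw [← hq]
    rw [hkm.1] at hw
    exact congrArg q (Prod.ext hw.symm rfl)
  rcases eq_or_lt_of_le h2 with he2 | hlt2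
  · -- k + t = mp + cp : right end
    have hkm : k = mp ∧ (t:ℝ) = cp := by
      constructor
      · have : (mp:ℝ) ≤ k + 1 := by nlinarith [t.2.2]
        have h3 : (mp:ℝ) < k + 1 := by linarith [t.2.2]
        have h4 : mp < k + 1 := by exact_mod_cast h3
        omega
      · have h7 : k ≤ mp := hk.2
        have h3 : (mp:ℝ) < k + 1 := by linarith [t.2.2]
        have h4 : mp < k + 1 := by exact_mod_cast h3
        have h5 : k = mp := by omega
        have h8 : (k:ℝ) = mp := by exact_mod_cast h5
        linarith
    refine Or.inr ⟨v, hv, t, hkm.2, ?_⟩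
    rw [← hq]
    rw [hkm.1] at hw
    exact congrArg q (Prod.ext hw.symm rfl)
  · refine Or.inl (Or.inl ⟨k, v, t, hv, hlt1, hlt2, ?_⟩)
    rw [← hq]
    exact congrArg q (Prod.ext hw.symm rfl)


/-! ### trapping K inside a single orbit segment -/

lemma subset_seg {K : Set SuspShift} (x : ShiftSpace) (WU : Finset ℤ) (mm mp : ℤ)
    {cm cp : ℝ} (hcm0 : 0 < cm) (hcp1 : cp < 1)
    (hsub : ∀ n : ℕ, K ⊆ tube (Cyl x (WU ∪ Finset.Icc (-(n:ℤ)) (n:ℤ))) mm mp cm cp) :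
    K ⊆ seg x mm mp cm cp := by
  intro zz hzz
  obtain ⟨⟨a, b⟩, rfl⟩ := Quot.exists_rep zz
  have H : ∀ n : ℕ, ∃ j : ℤ, (mm:ℝ) + cm ≤ j + (b:ℝ) ∧ (j:ℝ) + (b:ℝ) ≤ mp + cp ∧
      sh (-j) a ∈ Cyl x (WU ∪ Finset.Icc (-(n:ℤ)) (n:ℤ)) := by
    intro n
    have hmem := hsub n hzz
    simp only [tube, Set.mem_iUnion] at hmem
    obtain ⟨k, hk, ⟨w, t⟩, ⟨⟨v, hv, hw⟩, h1, h2⟩, hq⟩ := hmem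
    have hq' : q (w, t) = q (a, b) := hq
    have hwv : w = sh k v := hw.symm
    rcases q_eq_cases hq' with ⟨hwa, htb⟩ | ⟨ht1, hb0, has⟩ | ⟨hb1, ht0, hws⟩
    · -- w = a, t = b
      refine ⟨k, ?_, ?_, ?_⟩
      · rw [← htb]; exact h1
      · rw [← htb]; exact h2
      · have : sh (-k) a = v := by rw [← hwa, hwv, sh_sh, (by omega : -k + k = 0), sh_zero]
        rw [this]; exact hv
    · -- t = 1, b = 0, a = shiftMap w
      have ht1' : (t:ℝ) = 1 := by rw [ht1]; exact unit_one_coe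
      have hb0' : (b:ℝ) = 0 := by rw [hb0]; exact unit_zero_coe
      refine ⟨k + 1, ?_, ?_, ?_⟩
      · rw [hb0']; rw [ht1'] at h1; push_cast; push_cast at h1; linarith
      · rw [hb0']; rw [ht1'] at h2; push_cast; push_cast at h2; linarith
      · have ha : a = sh (k+1) v := by
          rw [has, hwv, shiftMap_eq_sh, sh_sh, (by omega : (1:ℤ) + k = k + 1)]
        have : sh (-(k+1)) a = v := by
          rw [ha, sh_sh, (by omega : -(k+1) + (k+1) = 0), sh_zero]
        rw [this]; exact hv
    · -- b = 1, t = 0, w = shiftMap a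
      have ht0' : (t:ℝ) = 0 := by rw [ht0]; exact unit_zero_coe
      have hb1' : (b:ℝ) = 1 := by rw [hb1]; exact unit_one_coe
      refine ⟨k - 1, ?_, ?_, ?_⟩
      · rw [hb1']; rw [ht0'] at h1; push_cast; push_cast at h1; linarith
      · rw [hb1']; rw [ht0'] at h2; push_cast; push_cast at h2; linarith
      · have ha : a = sh (k-1) v := by
          have h3 : sh 1 a = sh k v := by rw [← shiftMap_eq_sh, ← hws, hwv]
          simpa using sh_cancel h3
        have : sh (-(k-1)) a = v := by
          rw [ha, sh_sh, (by omega : -(k-1) + (k-1) = 0), sh_zero]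
        rw [this]; exact hv
  -- find j with sh (-j) a = x
  by_contra hns
  have hnoj : ∀ j : ℤ, (mm:ℝ) + cm ≤ j + (b:ℝ) → (j:ℝ) + (b:ℝ) ≤ mp + cp →
      sh (-j) a ≠ x := by
    intro j hj1 hj2 hjx
    apply hns
    have ha : a = sh j x := by
      rw [← hjx, sh_sh, (by omega : j + -j = 0), sh_zero]
    exact ⟨j, b, hj1, hj2, congrArg (Quot.mk suspRel) (Prod.ext ha rfl)⟩
  classical
  set g : ℤ → ℤ := fun j => if h : sh (-j) a ≠ x then Classical.choose (Function.ne_iff.mp h) else 0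
    with hg
  set n : ℕ := (Finset.Icc mm mp).sup (fun j => (g j).natAbs) with hn
  obtain ⟨j, h1, h2, hmem⟩ := H n
  have hjI : j ∈ Finset.Icc mm mp := by
    rw [Finset.mem_Icc]
    constructor
    · have hr : (mm:ℝ) < j + 1 := by linarith [b.2.2]
      have : mm < j + 1 := by exact_mod_cast hr
      omega
    · have hr : (j:ℝ) < mp + 1 := by linarith [b.2.1]
      have : j < mp + 1 := by exact_mod_cast hr
      omega
  have hne : sh (-j) a ≠ x := hnoj j h1 h2
  have hspec : (sh (-j) a) (g j) ≠ x (g j) := by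
    rw [hg]
    simp only [dif_pos hne]
    exact Classical.choose_spec (Function.ne_iff.mp hne)
  have hbound : (g j).natAbs ≤ n := Finset.le_sup (f := fun j => (g j).natAbs) hjI
  have : (sh (-j) a) (g j) = x (g j) := by
    apply hmem
    apply Finset.mem_union_right
    rw [Finset.mem_Icc]
    omega
  exact hspec this

/-! ### the key lemma: a closed preconnected set containing a box is everything -/

lemma boxed_eq_univ {K : Set SuspShift} (hcl : IsClosed K) (hpc : IsPreconnected K)
    {z : ShiftSpace} {W : Finset ℤ} {c d : ℝ} (hc : 0 < c) (hcd : c < d) (hd : d < 1)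
    (hbox : ∀ v ∈ Cyl z W, ∀ t : unitInterval, c < (t:ℝ) → (t:ℝ) < d → q (v, t) ∈ K) :
    K = Set.univ := by
  set N := W.sup (fun m => m.natAbs) with hN
  set xs := xstar z N with hxs
  have hxsW : xs ∈ Cyl z W :=
    xstar_mem_Cyl z N W (fun m hm => Finset.le_sup (f := fun m => m.natAbs) hm)
  set t0 : unitInterval := ⟨(c+d)/2, by constructor <;> linarith⟩ with ht0
  have ht0c : c < (t0:ℝ) := by show c < (c+d)/2; linarith
  have ht0d : (t0:ℝ) < d := by show (c+d)/2 < d; linarith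
  have ht00 : 0 < (t0:ℝ) := lt_trans hc ht0c
  have ht01 : (t0:ℝ) < 1 := lt_trans ht0d hd
  have hy : q (xs, t0) ∈ K := hbox xs hxsW t0 ht0c ht0d
  by_cases hfwd : ∀ k : ℤ, 1 ≤ k → ∀ t : unitInterval, q (sh k xs, t) ∈ K
  · apply Set.eq_univ_of_forall
    intro p
    by_contra hp
    obtain ⟨z', W', c', d', hc', hcd', hd', hbox'⟩ :=
      box_from_open hcl.isOpen_compl ⟨p, hp⟩
    obtain ⟨k, hk1, hkC⟩ := xstar_hits_fwd z N z' W' 1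
    set t' : unitInterval := ⟨(c'+d')/2, by constructor <;> linarith⟩
    have h1 : q (sh k xs, t') ∈ Kᶜ :=
      hbox' (sh k xs) hkC t' (by show c' < (c'+d')/2; linarith) (by show (c'+d')/2 < d'; linarith)
    exact h1 (hfwd k hk1 t')
  by_cases hbwd : ∀ k : ℤ, k ≤ -1 → ∀ t : unitInterval, q (sh k xs, t) ∈ K
  · apply Set.eq_univ_of_forall
    intro p
    by_contra hp
    obtain ⟨z', W', c', d', hc', hcd', hd', hbox'⟩ :=
      box_from_open hcl.isOpen_compl ⟨p, hp⟩
    obtain ⟨k, hk1, hkC⟩ := xstar_hits_bwd z N z' W' (-1)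
    set t' : unitInterval := ⟨(c'+d')/2, by constructor <;> linarith⟩
    have h1 : q (sh k xs, t') ∈ Kᶜ :=
      hbox' (sh k xs) hkC t' (by show c' < (c'+d')/2; linarith) (by show (c'+d')/2 < d'; linarith)
    exact h1 (hbwd k hk1 t')
  -- both directions fail: K is trapped in a finite tube, contradiction
  exfalso
  push_neg at hfwd hbwd
  obtain ⟨kp, hkp, tp, htp⟩ := hfwd
  obtain ⟨km, hkm, tm, htm⟩ := hbwd
  obtain ⟨mp, cp, Wp, hmp1, hmp2, hcp0, hcp1, _, hWp⟩ :=
    end_extract hcl xs htp (ρ := 1) one_pos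
  obtain ⟨mm, cm, Wm, hmm1, hmm2, hcm0, hcm1, hcmρ, hWm⟩ :=
    end_extract hcl xs htm (ρ := (t0:ℝ)) ht00
  have hu_lt : (mm:ℝ) + cm < (t0:ℝ) := by
    rcases lt_or_ge mm 0 with h | h
    · have h' : mm ≤ -1 := by omega
      have h'' : (mm:ℝ) ≤ -1 := by exact_mod_cast h'
      linarith
    · have hm0 : mm = 0 := by omega
      have hmmk : mm = km + 1 := by omega
      have hlt := hcmρ hmmk
      have hlt' : cm < (c+d)/2 := hlt
      rw [hm0]
      push_cast
      linarith
  have hu_gt : (t0:ℝ) < mp + cp := by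
    have : (1:ℝ) ≤ mp := by exact_mod_cast (by omega : (1:ℤ) ≤ mp)
    linarith
  set WU := (W ∪ Wm ∪ Wp) with hWU
  have hUsub : ∀ n : ℕ, K ⊆ tube (Cyl xs (WU ∪ Finset.Icc (-(n:ℤ)) (n:ℤ))) mm mp cm cp := by
    intro n
    set U := Cyl xs (WU ∪ Finset.Icc (-(n:ℤ)) (n:ℤ)) with hU
    have hxU : xs ∈ U := mem_Cyl_self _ _
    have hUsubWm : U ⊆ Cyl xs Wm :=
      Cyl_mono xs (fun i hi =>
        Finset.mem_union_left _ (Finset.mem_union_left _ (Finset.mem_union_right _ hi)))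
    have hUsubWp : U ⊆ Cyl xs Wp :=
      Cyl_mono xs (fun i hi => Finset.mem_union_left _ (Finset.mem_union_right _ hi))
    have hEm : ∀ y ∈ tubeEnd U mm cm, y ∉ K := by
      rintro y ⟨v, hv, t, htc, rfl⟩
      exact hWm v (hUsubWm hv) t htc
    have hEp : ∀ y ∈ tubeEnd U mp cp, y ∉ K := by
      rintro y ⟨v, hv, t, htc, rfl⟩
      exact hWp v (hUsubWp hv) t htc
    have hcover : K ⊆ opentube U mm mp cm cp ∪ (tube U mm mp cm cp)ᶜ := by
      intro p hp
      by_cases hpt : p ∈ tube U mm mp cm cp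
      · rcases tube_subset hcm0 hcm1 hcp0 hcp1 hpt with (ho | hem) | hep
        · exact Or.inl ho
        · exact absurd hp (hEm p hem)
        · exact absurd hp (hEp p hep)
      · exact Or.inr hpt
    have hdisj : Disjoint (opentube U mm mp cm cp) (tube U mm mp cm cp)ᶜ :=
      Set.disjoint_left.mpr fun {p} hp hpc => hpc (opentube_subset_tube hcm0 hcp1 hp)
    have hne : (K ∩ opentube U mm mp cm cp).Nonempty := by
      refine ⟨q (xs, t0), hy, ⟨0, xs, t0, hxU, ?_, ?_, by rw [sh_zero]⟩⟩
      · have hu_lt' : (mm:ℝ) + cm < (c+d)/2 := hu_lt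
        show (mm:ℝ) + cm < (0:ℤ) + (t0:ℝ)
        push_cast
        linarith
      · have hu_gt' : (c+d)/2 < (mp:ℝ) + cp := hu_gt
        show ((0:ℤ):ℝ) + (t0:ℝ) < mp + cp
        push_cast
        linarith
    have hKop := IsPreconnected.subset_left_of_subset_union
      (isOpen_opentube (isOpen_Cyl _ _) mm mp cm cp)
      (isClosed_tube ((isClosed_Cyl _ _).isCompact) mm mp cm cp).isOpen_compl
      hdisj hcover hne hpc
    exact hKop.trans (opentube_subset_tube hcm0 hcp1)
  have hseg := subset_seg xs WU mm mp hcm0 hcp1 hUsub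
  -- box is infinite but seg meets the fiber at t0 in finitely many points
  have hfin : (Cyl z W ⊆ (fun k : ℤ => sh k xs) '' (Finset.Icc mm mp : Set ℤ)) := by
    intro v hv
    have hvK : q (v, t0) ∈ K := hbox v hv t0 ht0c ht0d
    obtain ⟨k, t, h1, h2, heq⟩ := hseg hvK
    rcases q_eq_cases heq with ⟨hva, htb⟩ | ⟨hb1, _, _⟩ | ⟨_, hb0, _⟩
    · refine ⟨k, ?_, hva.symm⟩
      have htt : (t:ℝ) = (t0:ℝ) := by rw [← htb]
      rw [htt] at h1 h2
      simp only [Finset.coe_Icc, Set.mem_Icc]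
      constructor
      · have hr : (mm:ℝ) < k + 1 := by linarith
        have : mm < k + 1 := by exact_mod_cast hr
        omega
      · have hr : (k:ℝ) < mp + 1 := by linarith
        have : k < mp + 1 := by exact_mod_cast hr
        omega
    · exact absurd (by rw [hb1]; exact unit_one_coe : (t0:ℝ) = 1) (ne_of_lt ht01)
    · exact absurd (by rw [hb0]; exact unit_zero_coe : (t0:ℝ) = 0) (ne_of_gt ht00)
  exact (Cyl_infinite z W) (Set.Finite.subset ((Finset.Icc mm mp).finite_toSet.image _) hfin)


/-! ### connectivity of the suspension -/

def arc (x : ShiftSpace) (k : ℤ) : Set SuspShift :=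
  q '' ({sh k x} ×ˢ (Set.univ : Set unitInterval))

lemma isPreconnected_arc (x : ShiftSpace) (k : ℤ) : IsPreconnected (arc x k) :=
  (isPreconnected_singleton.prod isPreconnected_univ).image _ continuous_q.continuousOn

lemma mem_arc (x : ShiftSpace) (k : ℤ) (t : unitInterval) : q (sh k x, t) ∈ arc x k :=
  ⟨(sh k x, t), ⟨rfl, trivial⟩, rfl⟩

lemma arc_link (x : ShiftSpace) (k : ℤ) : q (sh (k+1) x, 0) ∈ arc x k := by
  rw [← q_seam]
  exact mem_arc x k 1

def chainP (x : ShiftSpace) : ℕ → Set SuspShift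
  | 0 => arc x 0
  | n+1 => chainP x n ∪ arc x (n+1)

def chainM (x : ShiftSpace) : ℕ → Set SuspShift
  | 0 => arc x 0
  | n+1 => chainM x n ∪ arc x (-(n+1))

lemma chainP_spec (x : ShiftSpace) (n : ℕ) :
    IsPreconnected (chainP x n) ∧ (∀ k : ℤ, 0 ≤ k → k ≤ n → arc x k ⊆ chainP x n) ∧
      chainP x n ⊆ ⋃ k : ℤ, arc x k := by
  induction n with
  | zero =>
    refine ⟨isPreconnected_arc x 0, fun k h1 h2 => ?_, Set.subset_iUnion (arc x) 0⟩
    have : k = 0 := by omega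
    rw [this, chainP]
  | succ n ih =>
    obtain ⟨hpre, hsub, hun⟩ := ih
    have hlink : q (sh ((n:ℤ)+1) x, 0) ∈ chainP x n :=
      hsub (n:ℤ) (by omega) (by omega) (arc_link x (n:ℤ))
    have hlink2 : q (sh ((n:ℤ)+1) x, 0) ∈ arc x ((n:ℤ)+1) := mem_arc x _ 0
    refine ⟨?_, ?_, ?_⟩
    · rw [chainP]
      exact IsPreconnected.union _ hlink hlink2 hpre (isPreconnected_arc x _)
    · intro k h1 h2
      rw [chainP]
      rcases eq_or_lt_of_le h2 with he | hlt
      · have he' : k = (n:ℤ) + 1 := by push_cast at he; omega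
        rw [he']
        exact Set.subset_union_right
      · have : k ≤ n := by push_cast at hlt; omega
        exact (hsub k h1 this).trans Set.subset_union_left
    · rw [chainP]
      exact Set.union_subset hun (Set.subset_iUnion (arc x) _)

lemma chainM_spec (x : ShiftSpace) (n : ℕ) :
    IsPreconnected (chainM x n) ∧ (∀ k : ℤ, -(n:ℤ) ≤ k → k ≤ 0 → arc x k ⊆ chainM x n) ∧
      chainM x n ⊆ ⋃ k : ℤ, arc x k := by
  induction n with
  | zero =>
    refine ⟨isPreconnected_arc x 0, fun k h1 h2 => ?_, Set.subset_iUnion (arc x) 0⟩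
    have : k = 0 := by omega
    rw [this, chainM]
  | succ n ih =>
    obtain ⟨hpre, hsub, hun⟩ := ih
    have hlink : q (sh (-(n:ℤ)) x, 0) ∈ chainM x n :=
      hsub (-(n:ℤ)) (by omega) (by omega) (mem_arc x _ 0)
    have hlink2 : q (sh (-(n:ℤ)) x, 0) ∈ arc x (-((n:ℤ)+1)) := by
      have h := arc_link x (-((n:ℤ)+1))
      rw [(by omega : -((n:ℤ)+1)+1 = -(n:ℤ))] at h
      exact h
    refine ⟨?_, ?_, ?_⟩
    · rw [chainM]
      exact IsPreconnected.union _ hlink hlink2 hpre (isPreconnected_arc x _)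
    · intro k h1 h2
      rw [chainM]
      rcases eq_or_lt_of_le h1 with he | hlt
      · have he' : k = -((n:ℤ) + 1) := by push_cast at he; omega
        rw [he']
        exact Set.subset_union_right
      · have : -(n:ℤ) ≤ k := by push_cast at hlt; omega
        exact (hsub k this h2).trans Set.subset_union_left
    · rw [chainM]
      exact Set.union_subset hun (Set.subset_iUnion (arc x) _)

lemma isPreconnected_sarc (x : ShiftSpace) : IsPreconnected (⋃ k : ℤ, arc x k) := by
  apply isPreconnected_of_forall (q (sh 0 x, 0))
  intro y hy
  obtain ⟨k, hk⟩ := Set.mem_iUnion.mp hy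
  rcases le_or_gt 0 k with h | h
  · refine ⟨chainP x k.toNat, (chainP_spec x k.toNat).2.2, ?_, ?_, (chainP_spec x k.toNat).1⟩
    · exact (chainP_spec x k.toNat).2.1 0 le_rfl (by omega) (mem_arc x 0 0)
    · exact (chainP_spec x k.toNat).2.1 k h (by omega) hk
  · refine ⟨chainM x (-k).toNat, (chainM_spec x (-k).toNat).2.2, ?_, ?_,
      (chainM_spec x (-k).toNat).1⟩
    · exact (chainM_spec x (-k).toNat).2.1 0 (by omega) le_rfl (mem_arc x 0 0)
    · exact (chainM_spec x (-k).toNat).2.1 k (by omega) (by omega) hk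

lemma closure_sarc (x : ShiftSpace) (N : ℕ) :
    closure (⋃ k : ℤ, arc (xstar x N) k) = Set.univ := by
  apply Set.eq_univ_of_forall
  intro p
  rw [mem_closure_iff]
  intro O hO hpO
  obtain ⟨z', W', c', d', hc', hcd', hd', hbox'⟩ := box_from_open hO ⟨p, hpO⟩
  obtain ⟨k, _, hkC⟩ := xstar_hits_fwd x N z' W' 1
  set t' : unitInterval := ⟨(c'+d')/2, by constructor <;> linarith⟩
  refine ⟨q (sh k (xstar x N), t'), ?_, Set.mem_iUnion.mpr ⟨k, mem_arc _ k t'⟩⟩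
  exact hbox' _ hkC t' (by show c' < (c'+d')/2; linarith) (by show (c'+d')/2 < d'; linarith)

end Susp

/-- The suspension `Y` of the full 2-shift is a continuum
(nonempty, compact and connected) and is indecomposable: it is not the union of
two compact connected proper subsets. -/
theorem suspension_of_two_shift_is_indecomposable_continuum :
    Nonempty SuspShift ∧ CompactSpace SuspShift ∧ ConnectedSpace SuspShift ∧
    ¬ ∃ A B : Set SuspShift,
        IsCompact A ∧ IsConnected A ∧ A ≠ Set.univ ∧
        IsCompact B ∧ IsConnected B ∧ B ≠ Set.univ ∧
        A ∪ B = Set.univ := by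
  open Susp in
  have hsurj : Function.Surjective (Quot.mk suspRel) := Quot.mk_surjective
  refine ⟨⟨Quot.mk suspRel (fun _ => false, 0)⟩, ?_, ?_, ?_⟩
  · exact ⟨hsurj.range_eq ▸ isCompact_range continuous_quot_mk⟩
  · have hpre : IsPreconnected (Set.univ : Set SuspShift) := by
      rw [← Susp.closure_sarc (fun _ => false) 0]
      exact (Susp.isPreconnected_sarc _).closure
    exact { isPreconnected_univ := hpre, toNonempty := ⟨Quot.mk suspRel (fun _ => false, 0)⟩ }
  · rintro ⟨A, B, hAc, hAconn, hAne, hBc, hBconn, hBne, hABu⟩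
    have hBcne : Bᶜ.Nonempty := by rwa [Set.nonempty_compl]
    obtain ⟨z, W, c, d, hc, hcd, hd, hbox⟩ := box_from_open hBc.isClosed.isOpen_compl hBcne
    have hboxA : ∀ v ∈ Susp.Cyl z W, ∀ t : unitInterval,
        c < (t:ℝ) → (t:ℝ) < d → Susp.q (v, t) ∈ A := by
      intro v hv t h1 h2
      have hp : Susp.q (v, t) ∈ Bᶜ := hbox v hv t h1 h2
      have hmem : Susp.q (v, t) ∈ A ∪ B := hABu ▸ Set.mem_univ _
      rcases hmem with h | h
      · exact h
      · exact absurd h hp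
    exact hAne (Susp.boxed_eq_univ hAc.isClosed hAconn.isPreconnected hc hcd hd hboxA)
end
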